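/- arXiv:math/0412170 — 9 statements merged into one kernel-verified Lean document; each statement's English description precedes it below -/
import Mathlib

section
/- In the complex group algebra of the free group F_N on N ≥ 1 generators, the square of the generating operator satisfies X_1 · X_1 = X_2 + 2N·1, where 1 is the identity of the algebra. -/
/-- `Xop N n` is the operator `X_n`: the sum, in the complex group algebra
`ℂ[F_N] = MonoidAlgebra ℂ (FreeGroup (Fin N))`, of the basis elements of all
words `w` whose reduced word has length `n`. Note `Xop N 0 = 1`. -/
noncomputable def Xop (N n : ℕ) : MonoidAlgebra ℂ (FreeGroup (Fin N)) :=
  ∑ᶠ w ∈ {w : FreeGroup (Fin N) | (FreeGroup.toWord w).length = n},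
    MonoidAlgebra.of ℂ (FreeGroup (Fin N)) w

/-- The canonical trace `τ` on `ℂ[F_N]`: the coefficient at the identity. -/
noncomputable def tr {N : ℕ} (a : MonoidAlgebra ℂ (FreeGroup (Fin N))) : ℂ := a.coeff 1

lemma reduce_pair {N : ℕ} (x y : Fin N × Bool) :
    FreeGroup.reduce [x, y] = if y = (x.1, !x.2) then [] else [x, y] := by
  rw [FreeGroup.reduce.cons, FreeGroup.reduce_singleton]
  obtain ⟨i, b⟩ := x; obtain ⟨j, c⟩ := y
  simp only [List.casesOn]
  by_cases h : (j, c) = (i, !b)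
  · obtain ⟨h1, h2⟩ := Prod.mk.injEq .. ▸ h
    rw [if_pos h, if_pos ⟨h1.symm, by simp [h2]⟩]
  · rw [if_neg h, if_neg]
    rintro ⟨h1, h2⟩
    exact h (by simp [Prod.ext_iff, h1, h2])

lemma mem_len1 {N : ℕ} (w : FreeGroup (Fin N)) :
    (FreeGroup.toWord w).length = 1 ↔ ∃ x : Fin N × Bool, w = FreeGroup.mk [x] := by
  constructor
  · intro h
    obtain ⟨x, hx⟩ := List.length_eq_one_iff.mp h
    exact ⟨x, by rw [← FreeGroup.mk_toWord (x := w), hx]⟩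
  · rintro ⟨x, rfl⟩
    rw [FreeGroup.toWord_mk, FreeGroup.reduce_singleton]
    rfl

lemma mem_len2 {N : ℕ} (w : FreeGroup (Fin N)) :
    (FreeGroup.toWord w).length = 2 ↔
      ∃ p : (Fin N × Bool) × (Fin N × Bool), p.2 ≠ (p.1.1, !p.1.2) ∧ w = FreeGroup.mk [p.1, p.2] := by
  constructor
  · intro h
    obtain ⟨x, y, hxy⟩ := List.length_eq_two.mp h
    have hw : w = FreeGroup.mk [x, y] := by rw [← FreeGroup.mk_toWord (x := w), hxy]
    refine ⟨(x, y), ?_, hw⟩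
    intro hc
    have hr : FreeGroup.reduce [x, y] = [x, y] := by
      rw [← hxy]; exact FreeGroup.reduce_toWord w
    rw [reduce_pair, if_pos hc] at hr
    simp at hr
  · rintro ⟨⟨x, y⟩, hne, rfl⟩
    rw [FreeGroup.toWord_mk, reduce_pair, if_neg hne]
    rfl

lemma mk_inj1 {N : ℕ} : Function.Injective (fun x : Fin N × Bool => FreeGroup.mk [x]) := by
  intro x y h
  have := congrArg FreeGroup.toWord h
  simp only [FreeGroup.toWord_mk, FreeGroup.reduce_singleton, List.cons.injEq] at this
  exact this.1

theorem stmt_0 (N : ℕ) (hN : 1 ≤ N) :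
    Xop N 1 * Xop N 1 = Xop N 2 + (2 * N : ℂ) • 1 := by
  classical
  set S := Fin N × Bool
  set T₁ : Finset (FreeGroup (Fin N)) :=
    Finset.univ.image (fun x : S => FreeGroup.mk [x]) with hT₁
  set P₂ : Finset (S × S) :=
    Finset.univ.filter (fun p : S × S => p.2 ≠ (p.1.1, !p.1.2)) with hP₂
  set T₂ : Finset (FreeGroup (Fin N)) :=
    P₂.image (fun p : S × S => FreeGroup.mk [p.1, p.2]) with hT₂
  have hset1 : {w : FreeGroup (Fin N) | (FreeGroup.toWord w).length = 1} = ↑T₁ := by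
    ext w
    simp only [Set.mem_setOf_eq, mem_len1, hT₁, Finset.coe_image, Set.mem_image,
      Finset.coe_univ, Set.mem_univ, true_and]
    exact ⟨fun ⟨x, h⟩ => ⟨x, h.symm⟩, fun ⟨x, h⟩ => ⟨x, h.symm⟩⟩
  have hset2 : {w : FreeGroup (Fin N) | (FreeGroup.toWord w).length = 2} = ↑T₂ := by
    ext w
    simp only [Set.mem_setOf_eq, mem_len2, hT₂, Finset.coe_image, Set.mem_image,
      Finset.mem_coe, hP₂, Finset.mem_filter, Finset.mem_univ, true_and]
    constructor
    · rintro ⟨p, hp, rfl⟩; exact ⟨p, hp, rfl⟩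
    · rintro ⟨p, hp, rfl⟩; exact ⟨p, hp, rfl⟩
  have h1 : Xop N 1 = ∑ x : S, MonoidAlgebra.single (FreeGroup.mk [x]) (1 : ℂ) := by
    rw [Xop, hset1, finsum_mem_coe_finset, hT₁,
      Finset.sum_image (fun a _ b _ h => mk_inj1 h)]
    rfl
  have hinj2 : ∀ p ∈ P₂, ∀ q ∈ P₂,
      FreeGroup.mk [p.1, p.2] = FreeGroup.mk [q.1, q.2] → p = q := by
    rintro ⟨a, b⟩ hp ⟨c, d⟩ hq h
    simp only [hP₂, Finset.mem_filter] at hp hq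
    have := congrArg FreeGroup.toWord h
    rw [FreeGroup.toWord_mk, FreeGroup.toWord_mk, reduce_pair, reduce_pair,
      if_neg hp.2, if_neg hq.2] at this
    simp only [List.cons.injEq, and_true] at this
    simp [this.1, this.2]
  have h2 : Xop N 2 = ∑ p ∈ P₂, MonoidAlgebra.single (FreeGroup.mk [p.1, p.2]) (1 : ℂ) := by
    rw [Xop, hset2, finsum_mem_coe_finset, hT₂, Finset.sum_image hinj2]
    rfl
  rw [h1, h2, Finset.sum_mul_sum]
  have key : ∀ x y : S,
      MonoidAlgebra.single (M := FreeGroup (Fin N)) (FreeGroup.mk [x]) (1 : ℂ) *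
        MonoidAlgebra.single (FreeGroup.mk [y]) (1 : ℂ) =
      MonoidAlgebra.single (FreeGroup.mk [x, y]) (1 : ℂ) := by
    intro x y
    rw [MonoidAlgebra.single_mul_single, one_mul, FreeGroup.mul_mk]
    rfl
  simp only [key]
  have one_eq : ∀ x : S,
      MonoidAlgebra.single (FreeGroup.mk [x, (x.1, !x.2)]) (1 : ℂ)
        = (1 : MonoidAlgebra ℂ (FreeGroup (Fin N))) := by
    intro x
    have hm : FreeGroup.mk [x, (x.1, !x.2)] = 1 := by
      rw [← FreeGroup.reduce.self (L := [x, (x.1, !x.2)]), reduce_pair, if_pos rfl,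
        FreeGroup.one_eq_mk]
    rw [hm, MonoidAlgebra.one_def]
  have inner : ∀ x : S, ∑ y : S, MonoidAlgebra.single (FreeGroup.mk [x, y]) (1 : ℂ)
      = (∑ y ∈ Finset.univ.filter (fun y : S => ¬ y = (x.1, !x.2)),
          MonoidAlgebra.single (FreeGroup.mk [x, y]) (1 : ℂ)) + 1 := by
    intro x
    rw [← Finset.sum_filter_add_sum_filter_not Finset.univ (fun y : S => ¬ y = (x.1, !x.2))]
    congr 1
    have hf : Finset.univ.filter (fun y : S => ¬¬ y = (x.1, !x.2)) = {(x.1, !x.2)} := by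
      ext y; simp
    rw [hf, Finset.sum_singleton, one_eq]
  simp only [inner]
  rw [Finset.sum_add_distrib]
  congr 1
  · rw [hP₂, Finset.sum_filter]
    rw [Fintype.sum_prod_type (f := fun a : S × S =>
      if a.2 ≠ (a.1.1, !a.1.2) then MonoidAlgebra.single (FreeGroup.mk [a.1, a.2]) (1 : ℂ) else 0)]
    exact Finset.sum_congr rfl fun x _ => by rw [Finset.sum_filter]
  · rw [Finset.sum_const, Finset.card_univ]
    have hc : Fintype.card S = 2 * N := by
      simp only [S, Fintype.card_prod, Fintype.card_fin, Fintype.card_bool]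
      ring
    rw [hc, ← Nat.cast_smul_eq_nsmul ℂ]
    norm_num
end

section
/- In the complex group algebra of the free group F_N on N ≥ 1 generators, for every n ≥ 2 one has X_1 · X_n = X_{n+1} + (2N−1)·X_{n−1}. -/
open FreeGroup MonoidAlgebra Finset

lemma finite_len (N n : ℕ) :
    {w : FreeGroup (Fin N) | (FreeGroup.toWord w).length = n}.Finite :=
  Set.Finite.preimage toWord_injective.injOn (List.finite_length_eq _ n)

noncomputable def WS (N n : ℕ) : Finset (FreeGroup (Fin N)) := (finite_len N n).toFinset

lemma mem_WS {N n : ℕ} {w : FreeGroup (Fin N)} : w ∈ WS N n ↔ (toWord w).length = n := by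
  simp [WS, Set.Finite.mem_toFinset]

lemma Xop_eq (N n : ℕ) :
    Xop N n = ∑ w ∈ WS N n, MonoidAlgebra.of ℂ (FreeGroup (Fin N)) w := by
  rw [Xop, ← (finite_len N n).coe_toFinset, finsum_mem_coe_finset]; rfl

noncomputable def e (N : ℕ) (p : Fin N × Bool) : FreeGroup (Fin N) := FreeGroup.mk [p]

lemma toWord_e (N : ℕ) (p : Fin N × Bool) : (e N p).toWord = [p] := by
  simp [e, reduce_singleton]

lemma e_inj (N : ℕ) : Function.Injective (e N) := by
  intro p q h
  have := congrArg FreeGroup.toWord h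
  simpa [toWord_e] using this

lemma WS_one (N : ℕ) : WS N 1 = Finset.image (e N) Finset.univ := by
  ext w
  simp only [mem_WS, Finset.mem_image, Finset.mem_univ, true_and]
  constructor
  · intro h
    match hw : w.toWord, h with
    | [p], _ =>
      exact ⟨p, by rw [← mk_toWord (x := w), hw]; rfl⟩
  · rintro ⟨p, rfl⟩; simp [toWord_e]

lemma e_inv (N : ℕ) (i : Fin N) (b : Bool) : (e N (i, b))⁻¹ = e N (i, !b) := by
  simp [e, inv_mk, invRev]

lemma len_e_mul (N : ℕ) (p : Fin N × Bool) (v : FreeGroup (Fin N)) :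
    ((e N p)⁻¹ * v).toWord.length =
      if v.toWord.head? = some p then v.toWord.length - 1 else v.toWord.length + 1 := by
  obtain ⟨i, b⟩ := p
  rw [e_inv]
  conv_lhs => rw [← mk_toWord (x := v)]
  rw [e, mul_mk, toWord_mk]
  show (FreeGroup.reduce ((i, !b) :: v.toWord)).length = _
  rw [reduce.cons, reduce_toWord]
  rcases hv : v.toWord with _ | ⟨⟨j, c⟩, t⟩
  · simp
  · dsimp only
    by_cases h : (i, b) = (j, c)
    · obtain ⟨rfl, rfl⟩ : i = j ∧ b = c := Prod.mk.injEq .. ▸ h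
      simp
    · have h1 : ¬ (i = j ∧ (!b) = !c) := by
        rintro ⟨rfl, hc⟩
        exact h (by simp [Bool.not_inj hc])
      have h2 : ¬ ((j, c) = (i, b)) := fun hh => h hh.symm
      rw [if_neg h1, if_neg (by simpa using h2)]
      simp

theorem stmt_1 (N : ℕ) (hN : 1 ≤ N) (n : ℕ) (hn : 2 ≤ n) :
    Xop N 1 * Xop N n = Xop N (n + 1) + ((2 * N - 1 : ℕ) : ℂ) • Xop N (n - 1) := by
  rw [Xop_eq, Xop_eq, Xop_eq, Xop_eq, Finset.sum_mul_sum]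
  ext v
  rw [MonoidAlgebra.coeff_add, Finsupp.add_apply, MonoidAlgebra.coeff_smul, Finsupp.smul_apply, smul_eq_mul]
  rw [MonoidAlgebra.coeff_sum, MonoidAlgebra.coeff_sum, MonoidAlgebra.coeff_sum,
    Finsupp.finset_sum_apply, Finsupp.finset_sum_apply, Finsupp.finset_sum_apply]
  have hof : ∀ (u : FreeGroup (Fin N)),
      (MonoidAlgebra.of ℂ (FreeGroup (Fin N)) u).coeff v = if u = v then (1:ℂ) else 0 := by
    intro u; rw [MonoidAlgebra.of_apply, MonoidAlgebra.coeff_single, Finsupp.single_apply]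
  have hRHS1 : ∑ w ∈ WS N (n+1), (MonoidAlgebra.of ℂ (FreeGroup (Fin N)) w).coeff v
      = if (toWord v).length = n + 1 then (1:ℂ) else 0 := by
    simp_rw [hof]
    rw [Finset.sum_ite_eq' (WS N (n+1)) v (fun _ => (1:ℂ))]
    simp [mem_WS]
  have hRHS2 : ∑ w ∈ WS N (n-1), (MonoidAlgebra.of ℂ (FreeGroup (Fin N)) w).coeff v
      = if (toWord v).length = n - 1 then (1:ℂ) else 0 := by
    simp_rw [hof]
    rw [Finset.sum_ite_eq' (WS N (n-1)) v (fun _ => (1:ℂ))]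
    simp [mem_WS]
  rw [hRHS1, hRHS2]
  have hinner : ∀ g ∈ WS N 1,
      (∑ w ∈ WS N n, MonoidAlgebra.of ℂ (FreeGroup (Fin N)) g *
        MonoidAlgebra.of ℂ (FreeGroup (Fin N)) w).coeff v
        = if (toWord (g⁻¹ * v)).length = n then (1:ℂ) else 0 := by
    intro g _
    rw [MonoidAlgebra.coeff_sum, Finsupp.finset_sum_apply]
    have key : ∀ w, (MonoidAlgebra.of ℂ (FreeGroup (Fin N)) g *
        MonoidAlgebra.of ℂ (FreeGroup (Fin N)) w).coeff v = if w = g⁻¹ * v then (1:ℂ) else 0 := by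
      intro w
      rw [MonoidAlgebra.of_apply, MonoidAlgebra.of_apply,
        MonoidAlgebra.single_mul_single, one_mul, MonoidAlgebra.coeff_single, Finsupp.single_apply]
      congr 1
      simp [eq_inv_mul_iff_mul_eq, eq_comm]
    simp_rw [key]
    rw [Finset.sum_ite_eq' (WS N n) (g⁻¹ * v) (fun _ => (1:ℂ))]
    simp [mem_WS]
  rw [Finset.sum_congr rfl hinner, WS_one, Finset.sum_image (fun a _ b _ h => e_inj N h)]
  simp_rw [len_e_mul]
  rcases hv : v.toWord with _ | ⟨q, t⟩
  · have h1 : ¬ ((0:ℕ) = n + 1) := by omega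
    have h2 : ¬ ((0:ℕ) = n - 1) := by omega
    have h3 : ¬ ((0:ℕ) + 1 = n) := by omega
    simp only [List.head?_nil, List.length_nil, reduceCtorEq, if_false, if_neg h1, if_neg h2,
      if_neg h3]
    simp
  · simp only [List.head?_cons, List.length_cons, Option.some.injEq,
      Nat.add_sub_cancel]
    by_cases hA : t.length = n
    · have h1 : t.length + 1 = n + 1 := by omega
      have h2 : ¬ (t.length + 1 = n - 1) := by omega
      rw [if_pos h1, if_neg h2, mul_zero, add_zero]
      have : ∀ p : Fin N × Bool,
          (if (if q = p then t.length else t.length + 1 + 1) = n then (1:ℂ) else 0)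
            = if q = p then (1:ℂ) else 0 := by
        intro p; split_ifs with h h' h' <;> first | rfl | omega
      simp_rw [this]
      rw [Finset.sum_ite_eq Finset.univ q (fun _ => (1:ℂ))]
      simp
    · by_cases hB : t.length + 2 = n
      · have h1 : ¬ (t.length + 1 = n + 1) := by omega
        have h2 : t.length + 1 = n - 1 := by omega
        rw [if_neg h1, if_pos h2, mul_one, zero_add]
        have : ∀ p : Fin N × Bool,
            (if (if q = p then t.length else t.length + 1 + 1) = n then (1:ℂ) else 0)
              = if q = p then (0:ℂ) else 1 := by
          intro p; split_ifs with h h' h' <;> first | rfl | omega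
        simp_rw [this]
        rw [Finset.sum_ite, Finset.sum_const_zero, Finset.sum_const, zero_add]
        have hfil : Finset.filter (fun x => ¬ q = x) Finset.univ = Finset.univ.erase q := by
          ext x; simp [eq_comm]
        rw [hfil, Finset.card_erase_of_mem (Finset.mem_univ q)]
        simp only [Finset.card_univ, Fintype.card_prod, Fintype.card_fin, Fintype.card_bool,
          nsmul_eq_mul, mul_one]
        rw [Nat.cast_sub (by omega), Nat.cast_sub (by omega)]
        push_cast
        ring
      · have h1 : ¬ (t.length + 1 = n + 1) := by omega
        have h2 : ¬ (t.length + 1 = n - 1) := by omega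
        rw [if_neg h1, if_neg h2, mul_zero, add_zero]
        have : ∀ p : Fin N × Bool,
            (if (if q = p then t.length else t.length + 1 + 1) = n then (1:ℂ) else 0)
              = 0 := by
          intro p; split_ifs with h h' <;> first | rfl | omega
        simp_rw [this]
        simp
end

section
/- Let x = X_1 be the generating operator of the complex group algebra of the free group F_N on N ≥ 1 generators. If k < n, then x^k · X_n = Σ_{i=0}^{k} binom(k,i)·(2N−1)^i · X_{n+k−2i}. -/
namespace XopAux

open FreeGroup

variable {N : ℕ}

lemma Sfin (N n : ℕ) : {w : FreeGroup (Fin N) | (toWord w).length = n}.Finite := by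
  have h := (List.finite_length_eq (Fin N × Bool) n).preimage
    (toWord_injective.injOn (s := toWord ⁻¹' {l | l.length = n}))
  exact h.subset (fun w hw => hw)

lemma Xop_eq (N n : ℕ) : Xop N n =
    ∑ w ∈ (Sfin N n).toFinset, MonoidAlgebra.single w (1:ℂ) := by
  rw [Xop, finsum_mem_eq_finite_toFinset_sum _ (Sfin N n)]
  rfl

lemma Xop_apply (N n : ℕ) (v : FreeGroup (Fin N)) :
    (Xop N n).coeff v = if (toWord v).length = n then 1 else 0 := by
  rw [Xop_eq, MonoidAlgebra.coeff_sum, Finsupp.finset_sum_apply]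
  simp [Finsupp.single_apply, (Sfin N n).mem_toFinset]

/-- The length-one word corresponding to a letter. -/
noncomputable def e (N : ℕ) (x : Fin N × Bool) : FreeGroup (Fin N) := mk [x]

lemma toWord_e (x : Fin N × Bool) : toWord (e N x) = [x] := by
  rw [e, toWord_mk, reduce_singleton]

lemma e_inj : Function.Injective (e N) := fun x y h => by
  have := congrArg toWord h
  simpa [toWord_e] using this

lemma e_inv (x : Fin N × Bool) : (e N x)⁻¹ = e N (x.1, !x.2) := by
  rw [e, e, inv_mk]
  rfl

lemma len_e_inv_mul (x : Fin N × Bool) (v : FreeGroup (Fin N)) :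
    (toWord ((e N x)⁻¹ * v)).length =
      List.casesOn (toWord v) 1 (fun y t => if x = y then t.length else t.length + 2) := by
  have h2 : (e N x)⁻¹ * v = mk ((x.1, !x.2) :: toWord v) := by
    rw [e_inv]
    conv_lhs => rw [← mk_toWord (x := v)]
    rw [e, mul_mk]
    rfl
  rw [h2, toWord_mk, reduce.cons, reduce_toWord]
  cases hv : toWord v with
  | nil => rfl
  | cons y t =>
    simp only []
    by_cases hxy : x = y
    · subst hxy
      simp
    · rw [if_neg, if_neg hxy]
      · simp
      · rintro ⟨h1, h2⟩
        exact hxy (Prod.ext h1 (Bool.not_inj h2))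

lemma S1_eq : (Sfin N 1).toFinset = Finset.univ.image (e N) := by
  ext w
  simp only [Set.Finite.mem_toFinset, Finset.mem_image, Finset.mem_univ, true_and]
  constructor
  · intro hw
    have hw' : (toWord w).length = 1 := hw
    obtain ⟨y, hy⟩ := List.length_eq_one_iff.mp hw'
    exact ⟨y, by rw [← mk_toWord (x := w), hy]; rfl⟩
  · rintro ⟨y, rfl⟩
    show (toWord (e N y)).length = 1
    rw [toWord_e]; rfl

lemma Xop_one_eq : Xop N 1 = ∑ x : Fin N × Bool, MonoidAlgebra.single (e N x) (1:ℂ) := by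
  rw [Xop_eq, S1_eq, Finset.sum_image (fun a _ b _ h => e_inj h)]

lemma key (N m : ℕ) (hm : 2 ≤ m) :
    Xop N 1 * Xop N m = Xop N (m+1) + (2*N-1 : ℕ) • Xop N (m-1) := by
  rw [← Nat.cast_smul_eq_nsmul ℂ]
  ext v
  rw [Xop_one_eq, Finset.sum_mul, MonoidAlgebra.coeff_sum, Finsupp.finset_sum_apply,
    MonoidAlgebra.coeff_add, Finsupp.add_apply, MonoidAlgebra.coeff_smul,
    Finsupp.smul_apply]
  simp only [MonoidAlgebra.coeff_single_mul_apply, one_mul, Xop_apply, len_e_inv_mul, smul_eq_mul]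
  cases hv : toWord v with
  | nil =>
    have h1 : ¬(1 = m) := by omega
    have h2 : ¬(0 = m + 1) := by omega
    have h3 : ¬(0 = m - 1) := by omega
    simp [h1, h2, h3]
  | cons y t =>
    have hsplit := Finset.sum_eq_sum_sdiff_singleton_add (Finset.mem_univ y)
      (fun x : Fin N × Bool =>
        if (List.casesOn ([y] ++ t) 1 fun y' t' => if x = y' then t'.length else t'.length + 2)
          = m then (1:ℂ) else 0)
    simp only [List.singleton_append] at hsplit
    rw [hsplit]
    have hcongr : ∀ x ∈ Finset.univ \ {y},
        (if (if x = y then t.length else t.length + 2) = m then (1:ℂ) else 0)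
          = (if t.length + 2 = m then (1:ℂ) else 0) := by
      intro x hx
      rw [Finset.mem_sdiff, Finset.mem_singleton] at hx
      rw [if_neg hx.2]
    rw [Finset.sum_congr rfl hcongr, Finset.sum_const]
    have hcard : (Finset.univ \ {y} : Finset (Fin N × Bool)).card = 2*N - 1 := by
      rw [Finset.card_sdiff_of_subset (Finset.subset_univ _), Finset.card_univ, Finset.card_singleton]
      simp only [Fintype.card_prod, Fintype.card_bool, Fintype.card_fin]
      omega
    rw [hcard]
    simp only [if_true, List.length_cons]
    simp only [show ((t.length + 1 = m + 1)) ↔ (t.length = m) from by omega,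
        show ((t.length + 1 = m - 1)) ↔ (t.length + 2 = m) from by omega, nsmul_eq_mul]
    ring

end XopAux

theorem stmt_3 (N : ℕ) (hN : 1 ≤ N) (k n : ℕ) (hkn : k < n) :
    (Xop N 1) ^ k * Xop N n =
      ∑ i ∈ Finset.range (k + 1),
        (k.choose i * (2 * N - 1) ^ i : ℕ) • Xop N (n + k - 2 * i) := by
  revert hkn
  induction k with
  | zero => intro _; simp
  | succ k ih =>
    intro hkn
    have hk : k < n := Nat.lt_of_succ_lt hkn
    rw [pow_succ', mul_assoc, ih hk, Finset.mul_sum]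
    have hstep : ∀ i ∈ Finset.range (k+1),
        Xop N 1 * ((k.choose i * (2*N-1)^i : ℕ) • Xop N (n + k - 2*i)) =
          (k.choose i * (2*N-1)^i : ℕ) • Xop N (n + (k+1) - 2*i)
          + (k.choose i * (2*N-1)^(i+1) : ℕ) • Xop N (n + (k+1) - 2*(i+1)) := by
      intro i hi
      rw [Finset.mem_range] at hi
      have h2 : 2 ≤ n + k - 2*i := by omega
      rw [mul_smul_comm, XopAux.key N _ h2, smul_add, smul_smul,
        show n + k - 2*i + 1 = n + (k+1) - 2*i from by omega,
        show n + k - 2*i - 1 = n + (k+1) - 2*(i+1) from by omega,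
        show k.choose i * (2*N-1)^i * (2*N-1) = k.choose i * (2*N-1)^(i+1) from by
          rw [mul_assoc, ← pow_succ]]
    rw [Finset.sum_congr rfl hstep, Finset.sum_add_distrib,
      Finset.sum_range_succ'
        (fun i => (((k+1).choose i * (2*N-1)^i : ℕ)) • Xop N (n + (k+1) - 2*i)) (k+1)]
    have hPascal : ∀ i ∈ Finset.range (k+1),
        (((k+1).choose (i+1) * (2*N-1)^(i+1) : ℕ)) • Xop N (n + (k+1) - 2*(i+1)) =
          ((k.choose i * (2*N-1)^(i+1) : ℕ)) • Xop N (n + (k+1) - 2*(i+1))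
          + ((k.choose (i+1) * (2*N-1)^(i+1) : ℕ)) • Xop N (n + (k+1) - 2*(i+1)) := by
      intro i _
      rw [← add_smul, Nat.choose_succ_succ, add_mul]
    rw [Finset.sum_congr rfl hPascal, Finset.sum_add_distrib]
    rw [Finset.sum_range_succ'
        (fun i => ((k.choose i * (2*N-1)^i : ℕ)) • Xop N (n + (k+1) - 2*i)) k]
    rw [Finset.sum_range_succ
        (fun i => ((k.choose (i+1) * (2*N-1)^(i+1) : ℕ)) • Xop N (n + (k+1) - 2*(i+1))) k]
    simp only [Nat.choose_succ_self, zero_mul, zero_smul, add_zero, Nat.choose_zero_right,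
      pow_zero, mul_one, one_mul, Nat.sub_zero, mul_zero]
    abel
end

section
/- Let x = X_1 be the generating operator of the complex group algebra of the free group F_N on N ≥ 1 generators. If k > n ≥ 1, then x^k · X_n = x^{k−n} · ( Σ_{i=0}^{n−1} binom(n,i)·(2N−1)^i · X_{2n−2i} + 2N·(2N−1)^{n−1} · 1 ). -/
open Finset FreeGroup

lemma wordSetFinite (N n : ℕ) : {w : FreeGroup (Fin N) | w.toWord.length = n}.Finite :=
  (List.finite_length_eq (Fin N × Bool) n).preimage FreeGroup.toWord_injective.injOn

noncomputable def Wn (N n : ℕ) : Finset (FreeGroup (Fin N)) := (wordSetFinite N n).toFinset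

lemma mem_Wn {N n : ℕ} {w : FreeGroup (Fin N)} : w ∈ Wn N n ↔ w.toWord.length = n := by
  simp [Wn, Set.Finite.mem_toFinset]

lemma Xop_eq_sum (N n : ℕ) :
    Xop N n = ∑ w ∈ Wn N n, MonoidAlgebra.of ℂ (FreeGroup (Fin N)) w :=
  finsum_mem_eq_finite_toFinset_sum _ _

lemma Xop_zero (N : ℕ) : Xop N 0 = 1 := by
  rw [Xop_eq_sum]
  have : Wn N 0 = {1} := by
    ext w
    simp [mem_Wn, List.length_eq_zero_iff, FreeGroup.toWord_eq_nil_iff]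
  rw [this, Finset.sum_singleton]
  rfl

lemma toWord_mk_single_mul {N : ℕ} (a : Fin N × Bool) (u : FreeGroup (Fin N)) :
    (FreeGroup.mk [a] * u).toWord = reduce (a :: u.toWord) := by
  conv_lhs => rw [← FreeGroup.mk_toWord (x := u), FreeGroup.mul_mk]
  rw [FreeGroup.toWord_mk]
  rfl

/-- inverse of a letter -/
def inL {N : ℕ} (a : Fin N × Bool) : Fin N × Bool := (a.1, !a.2)

@[simp] lemma inL_inL {N : ℕ} (a : Fin N × Bool) : inL (inL a) = a := by
  simp [inL]

lemma mk_single_mul_inL {N : ℕ} (a : Fin N × Bool) :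
    FreeGroup.mk [a] * FreeGroup.mk [inL a] = 1 := by
  rw [FreeGroup.mul_mk, ← FreeGroup.toWord_eq_nil_iff, FreeGroup.toWord_mk]
  show reduce (a :: [inL a]) = []
  rw [FreeGroup.reduce.cons]
  simp [FreeGroup.reduce_singleton, inL]

lemma inL_mk_single_mul {N : ℕ} (a : Fin N × Bool) :
    FreeGroup.mk [inL a] * FreeGroup.mk [a] = 1 := by
  have := mk_single_mul_inL (inL a)
  rwa [inL_inL] at this

lemma toWord_cons_cancel {N : ℕ} (a : Fin N × Bool) (u : FreeGroup (Fin N))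
    (h : u.toWord.head? = some (inL a)) :
    (FreeGroup.mk [a] * u).toWord = u.toWord.tail := by
  rw [toWord_mk_single_mul, FreeGroup.reduce.cons, FreeGroup.reduce_toWord]
  rcases hu : u.toWord with _ | ⟨b, t⟩
  · simp [hu] at h
  · rw [hu] at h
    simp only [List.head?_cons, Option.some_inj] at h
    subst h
    simp [inL]

lemma toWord_cons_nocancel {N : ℕ} (a : Fin N × Bool) (u : FreeGroup (Fin N))
    (h : u.toWord.head? ≠ some (inL a)) :
    (FreeGroup.mk [a] * u).toWord = a :: u.toWord := by
  rw [toWord_mk_single_mul, FreeGroup.reduce.cons, FreeGroup.reduce_toWord]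
  rcases hu : u.toWord with _ | ⟨b, t⟩
  · rfl
  · rw [hu] at h
    simp only [List.head?_cons, ne_eq, Option.some_inj] at h
    have : ¬ (a.1 = b.1 ∧ a.2 = !b.2) := by
      rintro ⟨h1, h2⟩
      exact h (by simp [inL, Prod.ext_iff, h1.symm, h2])
    simp [this]

@[simp] lemma toWord_mk_single {N : ℕ} (a : Fin N × Bool) :
    (FreeGroup.mk [a]).toWord = [a] := by
  rw [FreeGroup.toWord_mk, FreeGroup.reduce_singleton]

lemma Xop_one_eq (N : ℕ) :
    Xop N 1 = ∑ a : Fin N × Bool, MonoidAlgebra.of ℂ (FreeGroup (Fin N)) (FreeGroup.mk [a]) := by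
  rw [Xop_eq_sum]
  refine (Finset.sum_bij (fun (a : Fin N × Bool) _ => FreeGroup.mk [a]) ?_ ?_ ?_ ?_).symm
  · intro a _
    simp [mem_Wn]
  · intro a _ b _ h
    have := congrArg FreeGroup.toWord h
    simpa using this
  · intro w hw
    rw [mem_Wn] at hw
    obtain ⟨a, ha⟩ := List.length_eq_one_iff.mp hw
    exact ⟨a, Finset.mem_univ a, by rw [← ha, FreeGroup.mk_toWord]⟩
  · intro a _
    rfl

lemma X1_mul (N m : ℕ) (hm : 1 ≤ m) :
    Xop N 1 * Xop N m =
      Xop N (m + 1) + ((if m = 1 then 2 * N else 2 * N - 1) : ℕ) • Xop N (m - 1) := by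
  classical
  set F := FreeGroup (Fin N)
  set of' := MonoidAlgebra.of ℂ F with hof
  have key : Xop N 1 * Xop N m =
      ∑ p ∈ (Finset.univ ×ˢ Wn N m : Finset ((Fin N × Bool) × F)),
        of' (FreeGroup.mk [p.1] * p.2) := by
    rw [Xop_one_eq, Xop_eq_sum N m, Finset.sum_mul_sum, Finset.sum_product]
    exact Finset.sum_congr rfl fun a _ => Finset.sum_congr rfl fun w _ => (_root_.map_mul of' _ _).symm
  rw [key, ← Finset.sum_filter_add_sum_filter_not _
      (fun p : (Fin N × Bool) × F => p.2.toWord.head? = some (inL p.1)),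
      add_comm (Xop N (m + 1))]
  congr 1
  · -- cancellation part
    have maps : ∀ p ∈ (Finset.univ ×ˢ Wn N m).filter
        (fun p : (Fin N × Bool) × F => p.2.toWord.head? = some (inL p.1)),
        FreeGroup.mk [p.1] * p.2 ∈ Wn N (m - 1) := by
      rintro ⟨a, w⟩ hp
      simp only [Finset.mem_filter, Finset.mem_product, mem_Wn] at hp ⊢
      rw [toWord_cons_cancel a w hp.2, List.length_tail, hp.1.2]
    rw [← Finset.sum_fiberwise_of_maps_to' maps of', Xop_eq_sum, Finset.smul_sum]
    refine Finset.sum_congr rfl fun u hu => ?_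
    rw [Finset.sum_const]
    congr 1
    rw [mem_Wn] at hu
    -- count the fiber
    have hcard : ((((Finset.univ ×ˢ Wn N m).filter
        (fun p : (Fin N × Bool) × F => p.2.toWord.head? = some (inL p.1))).filter
          (fun p => FreeGroup.mk [p.1] * p.2 = u)).card : ℕ)
        = (Finset.univ.filter (fun a : Fin N × Bool => u.toWord.head? ≠ some a)).card := by
      refine Finset.card_bij' (fun p _ => p.1)
        (fun a _ => (a, FreeGroup.mk [inL a] * u)) ?_ ?_ ?_ ?_
      · rintro ⟨a, w⟩ hp
        simp only [Finset.mem_filter, Finset.mem_product, mem_Wn] at hp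
        obtain ⟨⟨⟨-, hwm⟩, hc⟩, hu'⟩ := hp
        simp only [Finset.mem_filter, Finset.mem_univ, true_and]
        intro hbad
        have hw : FreeGroup.mk [inL a] * u = w := by
          rw [← hu', ← mul_assoc, inL_mk_single_mul, one_mul]
        have hcc : u.toWord.head? = some (inL (inL a)) := by rwa [inL_inL]
        have := toWord_cons_cancel (inL a) u hcc
        rw [hw] at this
        have hlen := congrArg List.length this
        rw [hwm, List.length_tail] at hlen
        have hlu : u.toWord.length = m - 1 := by
          rw [← hu', toWord_cons_cancel a w hc, List.length_tail, hwm]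
        omega
      · rintro a ha
        simp only [Finset.mem_filter, Finset.mem_univ, true_and] at ha
        have hnc : u.toWord.head? ≠ some (inL (inL a)) := by rwa [inL_inL]
        have hw := toWord_cons_nocancel (inL a) u hnc
        simp only [Finset.mem_filter, Finset.mem_product, mem_Wn, Finset.mem_univ, true_and]
        have hlu : u.toWord.length = m - 1 := hu
        refine ⟨⟨?_, ?_⟩, ?_⟩
        · rw [hw]; simp only [List.length_cons]; omega
        · rw [hw]; rfl
        · rw [← mul_assoc, mk_single_mul_inL, one_mul]
      · rintro ⟨a, w⟩ hp
        simp only [Finset.mem_filter, Finset.mem_product, mem_Wn] at hp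
        obtain ⟨⟨⟨-, hwm⟩, hc⟩, hu'⟩ := hp
        have hw : FreeGroup.mk [inL a] * u = w := by
          rw [← hu', ← mul_assoc, inL_mk_single_mul, one_mul]
        simp [hw]
      · rintro a ha
        rfl
    rw [hcard]
    rcases eq_or_lt_of_le hm with h1 | h2
    · have hm1 : m = 1 := h1.symm
      subst hm1
      have hnil : u.toWord = [] := List.length_eq_zero_iff.mp hu
      rw [if_pos rfl]
      rw [Finset.filter_true_of_mem (fun a _ => by simp [hnil])]
      simp [Fintype.card_prod, Nat.mul_comm]
    · have hm1 : m ≠ 1 := by omega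
      rw [if_neg hm1]
      obtain ⟨b, t, hbt⟩ : ∃ b t, u.toWord = b :: t := by
        rcases hL : u.toWord with _ | ⟨b, t⟩
        · rw [hL] at hu; simp at hu; omega
        · exact ⟨b, t, rfl⟩
      have : (Finset.univ.filter (fun a : Fin N × Bool => u.toWord.head? ≠ some a))
          = Finset.univ.erase b := by
        ext a
        simp [hbt, eq_comm]
      rw [this, Finset.card_erase_of_mem (Finset.mem_univ b), Finset.card_univ]
      simp only [Fintype.card_prod, Fintype.card_fin, Fintype.card_bool]
      omega
  · -- no-cancellation part
    rw [Xop_eq_sum]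
    refine Finset.sum_bij (fun p _ => FreeGroup.mk [p.1] * p.2) ?_ ?_ ?_ ?_
    · rintro ⟨a, w⟩ hp
      simp only [Finset.mem_filter, Finset.mem_product, mem_Wn, Finset.mem_univ, true_and] at hp ⊢
      rw [toWord_cons_nocancel a w hp.2, List.length_cons, hp.1]
    · rintro ⟨a, w⟩ hp ⟨a', w'⟩ hp' h
      simp only [Finset.mem_filter, Finset.mem_product, mem_Wn, Finset.mem_univ, true_and] at hp hp'
      have := congrArg FreeGroup.toWord h
      rw [toWord_cons_nocancel a w hp.2, toWord_cons_nocancel a' w' hp'.2] at this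
      simp only [List.cons.injEq] at this
      obtain ⟨h1, h2⟩ := this
      simp [Prod.ext_iff, h1, FreeGroup.toWord_injective h2]
    · rintro u hu
      rw [mem_Wn] at hu
      obtain ⟨a, t, hat⟩ : ∃ a t, u.toWord = a :: t := by
        rcases hL : u.toWord with _ | ⟨a, t⟩
        · rw [hL] at hu; simp at hu
        · exact ⟨a, t, rfl⟩
      have hcc : u.toWord.head? = some (inL (inL a)) := by rw [inL_inL, hat]; rfl
      have hw := toWord_cons_cancel (inL a) u hcc
      have hwm : (FreeGroup.mk [inL a] * u).toWord.length = m := by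
        rw [hw, hat]; simp only [List.tail_cons]
        have := congrArg List.length hat
        simp only [List.length_cons] at this
        omega
      refine ⟨(a, FreeGroup.mk [inL a] * u), ?_, ?_⟩
      · simp only [Finset.mem_filter, Finset.mem_product, mem_Wn, Finset.mem_univ, true_and]
        refine ⟨hwm, ?_⟩
        intro hbad
        have hrec : FreeGroup.mk [a] * (FreeGroup.mk [inL a] * u) = u := by
          rw [← mul_assoc, mk_single_mul_inL, one_mul]
        have := toWord_cons_cancel a _ hbad
        rw [hrec] at this
        have hlen := congrArg List.length this
        rw [hu, List.length_tail, hwm] at hlen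
        omega
      · show FreeGroup.mk [a] * (FreeGroup.mk [inL a] * u) = u
        rw [← mul_assoc, mk_single_mul_inL, one_mul]
    · rintro ⟨a, w⟩ hp
      rfl

lemma pow_mul_Xop (N : ℕ) : ∀ n m : ℕ, n < m →
    Xop N 1 ^ n * Xop N m =
      ∑ i ∈ Finset.range (n + 1),
        (n.choose i * (2 * N - 1) ^ i) • Xop N (m + n - 2 * i) := by
  intro n
  induction n with
  | zero => intro m _; simp
  | succ n ih =>
    intro m hm
    have hx : Xop N 1 * Xop N m = Xop N (m + 1) + (2 * N - 1) • Xop N (m - 1) := by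
      rw [X1_mul N m (by omega), if_neg (by omega)]
    rw [pow_succ, mul_assoc, hx, mul_add, ih (m + 1) (by omega), mul_smul_comm,
      ih (m - 1) (by omega), Finset.smul_sum]
    have hK : ∀ i ∈ Finset.range (n + 1),
        (2 * N - 1) • ((n.choose i * (2 * N - 1) ^ i) • Xop N (m - 1 + n - 2 * i))
        = (n.choose i * (2 * N - 1) ^ (i + 1)) • Xop N (m + n - 1 - 2 * i) := by
      intro i _
      rw [smul_smul, show m - 1 + n - 2 * i = m + n - 1 - 2 * i by omega,
        show (2 * N - 1) * (n.choose i * (2 * N - 1) ^ i)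
          = n.choose i * (2 * N - 1) ^ (i + 1) by ring]
    rw [Finset.sum_congr rfl hK]
    -- RHS manipulation
    rw [Finset.sum_range_succ' (fun i => ((n+1).choose i * (2 * N - 1) ^ i) •
        Xop N (m + (n + 1) - 2 * i)) (n + 1)]
    have hF : ∀ i ∈ Finset.range (n + 1),
        ((n + 1).choose (i + 1) * (2 * N - 1) ^ (i + 1)) • Xop N (m + (n + 1) - 2 * (i + 1))
        = (n.choose i * (2 * N - 1) ^ (i + 1)) • Xop N (m + n - 1 - 2 * i)
          + (n.choose (i + 1) * (2 * N - 1) ^ (i + 1)) • Xop N (m + n - 1 - 2 * i) := by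
      intro i _
      have hidx : m + (n + 1) - 2 * (i + 1) = m + n - 1 - 2 * i := by omega
      rw [hidx, Nat.choose_succ_succ, add_mul, add_smul]
    rw [Finset.sum_congr rfl hF, Finset.sum_add_distrib]
    -- second RHS sum: peel the vanishing last term
    rw [Finset.sum_range_succ (fun i => (n.choose (i + 1) * (2 * N - 1) ^ (i + 1)) •
        Xop N (m + n - 1 - 2 * i)) n]
    rw [Nat.choose_succ_self, zero_mul, zero_smul, add_zero]
    -- LHS first sum: peel i = 0
    rw [Finset.sum_range_succ' (fun i => (n.choose i * (2 * N - 1) ^ i) •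
        Xop N (m + 1 + n - 2 * i)) n]
    have hG : ∀ i ∈ Finset.range n,
        (n.choose (i + 1) * (2 * N - 1) ^ (i + 1)) • Xop N (m + 1 + n - 2 * (i + 1))
        = (n.choose (i + 1) * (2 * N - 1) ^ (i + 1)) • Xop N (m + n - 1 - 2 * i) := by
      intro i _
      congr 2
      omega
    rw [Finset.sum_congr rfl hG]
    have h0 : (n.choose 0 * (2 * N - 1) ^ 0) • Xop N (m + 1 + n - 2 * 0)
        = ((n + 1).choose 0 * (2 * N - 1) ^ 0) • Xop N (m + (n + 1) - 2 * 0) := by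
      rw [show m + 1 + n - 2 * 0 = m + (n + 1) - 2 * 0 by omega,
        Nat.choose_zero_right, Nat.choose_zero_right]
    rw [h0]
    abel

lemma diag_formula (N : ℕ) : ∀ n : ℕ, 1 ≤ n →
    Xop N 1 ^ n * Xop N n =
      (∑ i ∈ Finset.range n, (n.choose i * (2 * N - 1) ^ i) • Xop N (2 * n - 2 * i))
      + (2 * N * (2 * N - 1) ^ (n - 1)) • (1 : MonoidAlgebra ℂ (FreeGroup (Fin N))) := by
  intro n
  induction n with
  | zero => omega
  | succ n ih =>
    intro _
    rcases Nat.eq_zero_or_pos n with h0 | hn1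
    · subst h0
      rw [pow_one, X1_mul N 1 le_rfl, if_pos rfl, Xop_zero]
      simp
    · -- n ≥ 1
      have hx : Xop N 1 * Xop N (n + 1) = Xop N (n + 2) + (2 * N - 1) • Xop N n := by
        rw [X1_mul N (n + 1) (by omega), if_neg (by omega)]
        norm_num
      rw [pow_succ, mul_assoc, hx, mul_add, mul_smul_comm, ih hn1,
        pow_mul_Xop N n (n + 2) (by omega)]
      rw [smul_add, Finset.smul_sum, smul_smul]
      have hco : (2 * N - 1) * (2 * N * (2 * N - 1) ^ (n - 1)) = 2 * N * (2 * N - 1) ^ n := by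
        have : (2 * N - 1) ^ n = (2 * N - 1) ^ (n - 1) * (2 * N - 1) := by
          rw [← pow_succ]
          congr 1
          omega
        rw [this]; ring
      rw [hco]
      have hK : ∀ i ∈ Finset.range n,
          (2 * N - 1) • ((n.choose i * (2 * N - 1) ^ i) • Xop N (2 * n - 2 * i))
          = (n.choose i * (2 * N - 1) ^ (i + 1)) • Xop N (2 * n - 2 * i) := by
        intro i _
        rw [smul_smul, show (2 * N - 1) * (n.choose i * (2 * N - 1) ^ i)
          = n.choose i * (2 * N - 1) ^ (i + 1) by ring]
      rw [Finset.sum_congr rfl hK]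
      -- goal sum: peel i = 0
      rw [Finset.sum_range_succ' (fun i => ((n + 1).choose i * (2 * N - 1) ^ i) •
          Xop N (2 * (n + 1) - 2 * i)) n]
      have hF : ∀ i ∈ Finset.range n,
          ((n + 1).choose (i + 1) * (2 * N - 1) ^ (i + 1)) • Xop N (2 * (n + 1) - 2 * (i + 1))
          = (n.choose i * (2 * N - 1) ^ (i + 1)) • Xop N (2 * n - 2 * i)
            + (n.choose (i + 1) * (2 * N - 1) ^ (i + 1)) • Xop N (2 * n - 2 * i) := by
        intro i _
        rw [show 2 * (n + 1) - 2 * (i + 1) = 2 * n - 2 * i by omega,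
          Nat.choose_succ_succ, add_mul, add_smul]
      rw [Finset.sum_congr rfl hF, Finset.sum_add_distrib]
      -- lhs binomial sum: peel i = 0
      rw [Finset.sum_range_succ' (fun i => (n.choose i * (2 * N - 1) ^ i) •
          Xop N (n + 2 + n - 2 * i)) n]
      have hG : ∀ i ∈ Finset.range n,
          (n.choose (i + 1) * (2 * N - 1) ^ (i + 1)) • Xop N (n + 2 + n - 2 * (i + 1))
          = (n.choose (i + 1) * (2 * N - 1) ^ (i + 1)) • Xop N (2 * n - 2 * i) := by
        intro i _
        congr 2
        omega
      rw [Finset.sum_congr rfl hG]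
      have h0 : (n.choose 0 * (2 * N - 1) ^ 0) • Xop N (n + 2 + n - 2 * 0)
          = ((n + 1).choose 0 * (2 * N - 1) ^ 0) • Xop N (2 * (n + 1) - 2 * 0) := by
        rw [show n + 2 + n - 2 * 0 = 2 * (n + 1) - 2 * 0 by omega,
          Nat.choose_zero_right, Nat.choose_zero_right]
      rw [h0]
      abel

theorem stmt_5 (N : ℕ) (hN : 1 ≤ N) (k n : ℕ) (hn : 1 ≤ n) (hkn : n < k) :
    (Xop N 1) ^ k * Xop N n =
      (Xop N 1) ^ (k - n) *
        ((∑ i ∈ Finset.range n,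
          (n.choose i * (2 * N - 1) ^ i : ℕ) • Xop N (2 * n - 2 * i))
        + (2 * N * (2 * N - 1) ^ (n - 1) : ℕ) • 1) := by
  conv_lhs => rw [show k = (k - n) + n by omega]
  rw [pow_add, mul_assoc, diag_formula N n hn]
end

section
/- Let x = X_1 be the generating operator of the complex group algebra of the free group F_N on N ≥ 1 generators, and let τ be the canonical trace (coefficient at the identity). For every n ≥ 1, τ(x^n · X_n) = 2N·(2N−1)^{n−1}. -/
open FreeGroup List

set_option linter.unusedSectionVars false

namespace Stmt6Aux

variable {β : Type*} [DecidableEq β]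

lemma reduce_eq_self_iff (L : List (β × Bool)) :
    reduce L = L ↔ List.Chain' (fun p q => ¬(p.1 = q.1 ∧ p.2 = !q.2)) L := by
  induction L with
  | nil => simp [List.Chain']
  | cons x L ih =>
    simp only [List.Chain']
    rw [List.isChain_cons]
    constructor
    · intro h
      rw [reduce.cons] at h
      rcases r : reduce L with _ | ⟨hd, tl⟩
      · rw [r] at h
        simp only at h
        injection h with _ h2
        rw [← h2]
        simp
      · rw [r] at h
        simp only at h
        split_ifs at h with hc
        · exfalso
          have hsub : (reduce L).length ≤ L.length :=
            (FreeGroup.Red.sublist reduce.red).length_le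
          rw [r] at hsub
          have := congrArg List.length h
          simp at this hsub
          omega
        · injection h with _ h2
          have hL : L = hd :: tl := h2.symm
          subst hL
          refine ⟨?_, ih.1 r⟩
          intro y hy
          simp at hy
          subst hy
          exact hc
    · rintro ⟨h1, h2⟩
      have hr : reduce L = L := ih.2 h2
      rw [reduce.cons, hr]
      cases L with
      | nil => rfl
      | cons hd tl =>
        simp only
        rw [if_neg (h1 hd (by simp))]

lemma chain'_toWord (w : FreeGroup β) :
    List.Chain' (fun p q => ¬(p.1 = q.1 ∧ p.2 = !q.2)) w.toWord :=
  (reduce_eq_self_iff _).1 (reduce_toWord w)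

lemma mul_toWord_of_not_cancels (p : β × Bool) (w : FreeGroup β)
    (h : ∀ hd ∈ w.toWord.head?, ¬(p.1 = hd.1 ∧ p.2 = !hd.2)) :
    (FreeGroup.mk [p] * w).toWord = p :: w.toWord := by
  conv_lhs => rw [← mk_toWord (x := w), mul_mk, toWord_mk]
  show reduce (p :: w.toWord) = _
  exact (reduce_eq_self_iff _).2 (List.isChain_cons.2 ⟨h, chain'_toWord w⟩)

lemma mul_toWord_of_cancels (p : β × Bool) (w : FreeGroup β) {tl : List (β × Bool)}
    (h : w.toWord = (p.1, !p.2) :: tl) :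
    (FreeGroup.mk [p] * w).toWord = tl := by
  conv_lhs => rw [← mk_toWord (x := w), mul_mk, toWord_mk]
  show reduce (p :: w.toWord) = _
  rw [reduce.cons]
  have : reduce w.toWord = (p.1, !p.2) :: tl := by rw [reduce_toWord, h]
  rw [this]
  simp

lemma toWord_mk_tail (w : FreeGroup β) :
    (FreeGroup.mk w.toWord.tail).toWord = w.toWord.tail := by
  rw [toWord_mk]
  exact (reduce_eq_self_iff _).2 (chain'_toWord w).tail

lemma toWord_mk_singleton (q : β × Bool) : (FreeGroup.mk [q]).toWord = [q] := by
  rw [toWord_mk, reduce_singleton]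

lemma inv_mk_singleton (q : β × Bool) :
    (FreeGroup.mk [q])⁻¹ = FreeGroup.mk [(q.1, !q.2)] := by
  rw [inv_mk]; simp [invRev]

end Stmt6Aux

namespace Stmt6Aux

lemma S_finite (N n : ℕ) : {w : FreeGroup (Fin N) | w.toWord.length = n}.Finite :=
  (List.finite_length_eq _ n).preimage toWord_injective.injOn

noncomputable def T (N n : ℕ) : Finset (FreeGroup (Fin N)) := (S_finite N n).toFinset

lemma mem_T {N n : ℕ} {w : FreeGroup (Fin N)} : w ∈ T N n ↔ w.toWord.length = n :=
  Set.Finite.mem_toFinset _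

lemma Xop_eq (N n : ℕ) :
    Xop N n = ∑ w ∈ T N n, MonoidAlgebra.single w (1 : ℂ) := by
  rw [Xop, ← Set.Finite.coe_toFinset (S_finite N n), finsum_mem_coe_finset]
  rfl

lemma gen_inj (N : ℕ) : Function.Injective (fun q : Fin N × Bool => FreeGroup.mk [q]) := by
  intro q q' h
  have := congrArg FreeGroup.toWord h
  simpa [toWord_mk_singleton] using this

lemma T_one (N : ℕ) :
    T N 1 = Finset.image (fun q : Fin N × Bool => FreeGroup.mk [q]) Finset.univ := by
  ext w
  simp only [mem_T, Finset.mem_image, Finset.mem_univ, true_and]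
  constructor
  · intro h
    obtain ⟨q, hq⟩ := List.length_eq_one_iff.1 h
    exact ⟨q, by rw [← mk_toWord (x := w), hq]⟩
  · rintro ⟨q, rfl⟩
    rw [toWord_mk_singleton]
    rfl

lemma x_eq (N : ℕ) :
    Xop N 1 = ∑ q : Fin N × Bool, MonoidAlgebra.single (FreeGroup.mk [q]) (1 : ℂ) := by
  rw [Xop_eq, T_one, Finset.sum_image fun q _ q' _ h => gen_inj N h]

lemma coeff (N : ℕ) : ∀ (n : ℕ) (w : FreeGroup (Fin N)), n ≤ w.toWord.length →
    ((Xop N 1) ^ n).coeff w = if w.toWord.length = n then 1 else 0 := by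
  intro n
  induction n with
  | zero =>
    intro w _
    rw [pow_zero, MonoidAlgebra.one_def, MonoidAlgebra.coeff_single, Finsupp.single_apply]
    by_cases h : w = 1
    · subst h; simp [toWord_one]
    · rw [if_neg fun e => h e.symm, if_neg (by
        rw [List.length_eq_zero_iff, toWord_eq_nil_iff]; exact h)]
  | succ n ih =>
    intro w hw
    obtain ⟨hd, tl, hL⟩ : ∃ hd tl, w.toWord = hd :: tl := by
      cases hLs : w.toWord with
      | nil => rw [hLs] at hw; simp at hw
      | cons a l => exact ⟨a, l, rfl⟩
    rw [pow_succ']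
    nth_rewrite 1 [x_eq]
    rw [Finset.sum_mul, MonoidAlgebra.coeff_sum, Finset.sum_apply']
    have hterm : ∀ q : Fin N × Bool,
        (MonoidAlgebra.single (FreeGroup.mk [q]) (1:ℂ) * (Xop N 1) ^ n).coeff w
          = if q = hd then (if tl.length = n then 1 else 0) else 0 := by
      intro q
      rw [MonoidAlgebra.single_mul_apply, one_mul, inv_mk_singleton]
      have hwl : w.toWord.length = tl.length + 1 := by rw [hL]; simp
      by_cases hq : q = hd
      · subst hq
        have hc : (FreeGroup.mk [(q.1, !q.2)] * w).toWord = tl :=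
          mul_toWord_of_cancels _ _ (by rw [hL]; simp)
        rw [if_pos rfl, ih _ (by rw [hc]; omega), hc]
      · have hnc : (FreeGroup.mk [(q.1, !q.2)] * w).toWord = (q.1, !q.2) :: w.toWord := by
          apply mul_toWord_of_not_cancels
          intro y hy
          rw [hL] at hy
          simp only [List.head?_cons, Option.mem_some_iff] at hy
          subst hy
          rintro ⟨h1, h2⟩
          exact hq (Prod.ext h1 (by simpa using h2))
        have hlen : (FreeGroup.mk [(q.1, !q.2)] * w).toWord.length = tl.length + 2 := by
          rw [hnc]; simp [hwl]
        rw [if_neg hq, ih _ (by omega), if_neg (by omega)]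
    rw [Finset.sum_congr rfl fun q _ => hterm q, Finset.sum_ite_eq' Finset.univ hd]
    rw [if_pos (Finset.mem_univ hd)]
    have : w.toWord.length = tl.length + 1 := by rw [hL]; simp
    by_cases h : tl.length = n
    · rw [if_pos h, if_pos (by omega)]
    · rw [if_neg h, if_neg (by omega)]

lemma tr_eq_card (N n : ℕ) :
    tr ((Xop N 1) ^ n * Xop N n) = ((T N n).card : ℂ) := by
  rw [tr, Xop_eq N n, Finset.mul_sum, MonoidAlgebra.coeff_sum, Finset.sum_apply']
  rw [Finset.sum_congr rfl (fun w hw => ?_), Finset.sum_const, nsmul_eq_mul, mul_one]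
  rw [MonoidAlgebra.mul_single_apply, one_mul, mul_one]
  have hlen : w⁻¹.toWord.length = n := by
    rw [toWord_inv, invRev_length]; exact mem_T.1 hw
  rw [coeff N n _ (le_of_eq hlen.symm), if_pos hlen]

lemma card_T_one (N : ℕ) : (T N 1).card = 2 * N := by
  rw [T_one, Finset.card_image_of_injective _ (gen_inj N), Finset.card_univ]
  simp [Fintype.card_prod]
  omega

lemma card_T_succ (N n : ℕ) (hn : 1 ≤ n) :
    (T N (n + 1)).card = (T N n).card * (2 * N - 1) := by
  classical
  rw [Finset.card_eq_sum_card_fiberwise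
    (f := fun w : FreeGroup (Fin N) => FreeGroup.mk w.toWord.tail) (t := T N n)
    (fun w hw => by
      rw [Finset.mem_coe, mem_T] at hw ⊢
      rw [toWord_mk_tail, List.length_tail, hw]
      omega)]
  rw [Finset.sum_congr rfl (fun v hv => ?_), Finset.sum_const, smul_eq_mul]
  have hvlen : v.toWord.length = n := mem_T.1 hv
  obtain ⟨h0, t0, hV⟩ : ∃ a l, v.toWord = a :: l := by
    cases hLs : v.toWord with
    | nil => rw [hLs] at hvlen; simp at hvlen; omega
    | cons a l => exact ⟨a, l, rfl⟩
  have hbad : (2 * N - 1) = (Finset.univ.erase (h0.1, !h0.2)).card := by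
    rw [Finset.card_erase_of_mem (Finset.mem_univ _), Finset.card_univ]
    simp [Fintype.card_prod]
    omega
  rw [hbad]
  letI : Inhabited (Fin N × Bool) := ⟨h0⟩
  have hhead : v.toWord.head? = some h0 := by rw [hV]; rfl
  refine Finset.card_bij' (fun w _ => w.toWord.headI) (fun q _ => FreeGroup.mk [q] * v)
    ?_ ?_ ?_ ?_
  · -- hi
    intro w hw
    rw [Finset.mem_filter] at hw
    obtain ⟨hw1, hw2⟩ := hw
    have hwl : w.toWord.length = n + 1 := mem_T.1 hw1
    obtain ⟨a, l, hW⟩ : ∃ a l, w.toWord = a :: l := by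
      cases hLs : w.toWord with
      | nil => rw [hLs] at hwl; simp at hwl
      | cons a l => exact ⟨a, l, rfl⟩
    have hl : l = v.toWord := by
      have h3 := toWord_mk_tail w
      rw [hW, List.tail_cons] at h3
      rw [← hw2, hW, List.tail_cons, h3]
    have hch := chain'_toWord w
    rw [hW, hl, hV] at hch
    have hrel := (List.isChain_cons_cons.1 hch).1
    rw [hW, List.headI_cons, Finset.mem_erase]
    refine ⟨fun e => hrel ?_, Finset.mem_univ _⟩
    rw [e]
    exact ⟨rfl, rfl⟩
  · -- hj
    intro q hq
    rw [Finset.mem_erase] at hq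
    have hnc : (FreeGroup.mk [q] * v).toWord = q :: v.toWord := by
      apply mul_toWord_of_not_cancels
      intro y hy
      rw [hhead, Option.mem_some_iff] at hy
      subst hy
      rintro ⟨e1, e2⟩
      exact hq.1 (Prod.ext e1 e2)
    refine Finset.mem_filter.2 ⟨?_, ?_⟩
    · rw [mem_T, hnc]
      simp [hvlen]
    · rw [hnc, List.tail_cons]
      exact mk_toWord
  · -- left_inv
    intro w hw
    rw [Finset.mem_filter] at hw
    obtain ⟨hw1, hw2⟩ := hw
    have hwl : w.toWord.length = n + 1 := mem_T.1 hw1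
    obtain ⟨a, l, hW⟩ : ∃ a l, w.toWord = a :: l := by
      cases hLs : w.toWord with
      | nil => rw [hLs] at hwl; simp at hwl
      | cons a l => exact ⟨a, l, rfl⟩
    have hl : l = v.toWord := by
      have h3 := toWord_mk_tail w
      rw [hW, List.tail_cons] at h3
      rw [← hw2, hW, List.tail_cons, h3]
    rw [hW, List.headI_cons]
    conv_rhs => rw [← mk_toWord (x := w), hW, hl]
    rw [show (a :: v.toWord) = [a] ++ v.toWord from rfl, ← mul_mk, mk_toWord]
  · -- right_inv
    intro q hq
    rw [Finset.mem_erase] at hq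
    have hnc : (FreeGroup.mk [q] * v).toWord = q :: v.toWord := by
      apply mul_toWord_of_not_cancels
      intro y hy
      rw [hhead, Option.mem_some_iff] at hy
      subst hy
      rintro ⟨e1, e2⟩
      exact hq.1 (Prod.ext e1 e2)
    rw [hnc, List.headI_cons]

lemma card_T (N n : ℕ) (hn : 1 ≤ n) :
    (T N n).card = 2 * N * (2 * N - 1) ^ (n - 1) := by
  obtain ⟨m, rfl⟩ : ∃ m, n = m + 1 := ⟨n - 1, by omega⟩
  induction m with
  | zero => simpa using card_T_one N
  | succ m ih =>
    rw [card_T_succ N (m + 1) (by omega), ih (by omega)]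
    simp only [Nat.add_sub_cancel]
    rw [pow_succ]
    ring

end Stmt6Aux

theorem stmt_6 (N : ℕ) (hN : 1 ≤ N) (n : ℕ) (hn : 1 ≤ n) :
    tr ((Xop N 1) ^ n * Xop N n) = (2 * N * (2 * N - 1) ^ (n - 1) : ℕ) := by
  rw [Stmt6Aux.tr_eq_card N n, Stmt6Aux.card_T N n hn]
end

section
/- Let x = X_1 be the generating operator of the complex group algebra of the free group F_N on N ≥ 1 generators, and let τ be the canonical trace (coefficient at the identity). Suppose k = n + k' with n ≥ 1 and 0 ≤ k' < 2n. Then τ(x^k · X_n) equals the sum of binom(n,i)·(2N−1)^i · τ(x^{k'} · X_{2n−2i}) over those indices i with 1 ≤ i ≤ n−1 and 2n − 2i ≤ k', plus the term 2N·(2N−1)^{n−1} · τ(x^{k'}); in particular all terms τ(x^{k'}·X_{2n−2i}) with 2n − 2i > k' may be omitted since they vanish. -/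
open FreeGroup MonoidAlgebra

namespace Stmt10

variable {N : ℕ}

noncomputable def S (N n : ℕ) : Finset (FreeGroup (Fin N)) :=
  (Set.Finite.preimage (Set.injOn_of_injective FreeGroup.toWord_injective)
    (List.finite_length_eq _ n)).toFinset

lemma mem_S {w : FreeGroup (Fin N)} {n : ℕ} : w ∈ S N n ↔ w.toWord.length = n := by
  simp [S]

lemma Xop_eq (N n : ℕ) :
    Xop N n = ∑ w ∈ S N n, MonoidAlgebra.single w (1 : ℂ) := by
  rw [Xop, ← finsum_mem_coe_finset]
  congr 1
  ext w
  simp [mem_S, Set.mem_setOf_eq]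

-- prepend computation
lemma toWord_cons (a : Fin N × Bool) (w : FreeGroup (Fin N)) :
    (FreeGroup.mk [a] * w).toWord =
      match w.toWord with
      | [] => [a]
      | hd :: tl => if a.1 = hd.1 ∧ a.2 = !hd.2 then tl else a :: hd :: tl := by
  conv_lhs => rw [← FreeGroup.mk_toWord (x := w), FreeGroup.mul_mk, FreeGroup.toWord_mk]
  rw [show ([a] ++ w.toWord) = a :: w.toWord from rfl, FreeGroup.reduce.cons,
    FreeGroup.reduce_toWord]
  cases w.toWord with
  | nil => rfl
  | cons hd tl => rfl
lemma reduce_tail {hd : Fin N × Bool} {tl} (h : FreeGroup.reduce (hd :: tl) = hd :: tl) :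
    FreeGroup.reduce tl = tl := by
  have hc := FreeGroup.reduce.cons (L := tl) hd
  rcases h' : FreeGroup.reduce tl with _ | ⟨h2, t2⟩
  · rw [h', h] at hc
    simp only [List.casesOn] at hc
    cases hc; rfl
  · rw [h', h] at hc
    by_cases hif : hd.1 = h2.1 ∧ hd.2 = !h2.2
    · simp only [hif, and_self, if_true] at hc
      have hlen := (FreeGroup.reduce.red (L := tl)).length_le
      rw [h'] at hlen
      simp only [List.length_cons] at hlen
      have := congrArg List.length hc
      simp only [List.length_cons] at this
      omega
    · simp only [hif, if_neg, if_false] at hc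
      cases hc
      exact h'.symm ▸ rfl

lemma not_cancel_of_reduced {hd h2 : Fin N × Bool} {t2}
    (h : FreeGroup.reduce (hd :: h2 :: t2) = hd :: h2 :: t2) :
    ¬(hd.1 = h2.1 ∧ hd.2 = !h2.2) := by
  intro hif
  have ht : FreeGroup.reduce (h2 :: t2) = h2 :: t2 := reduce_tail h
  have hc := FreeGroup.reduce.cons (L := h2 :: t2) hd
  rw [ht, h] at hc
  simp only [hif, and_self, if_true] at hc
  have := congrArg List.length hc
  simp only [List.length_cons] at this
  omega
lemma toWord_cons_of_ne {a : Fin N × Bool} {w : FreeGroup (Fin N)}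
    (h : w.toWord.head? ≠ some (a.1, !a.2)) :
    (FreeGroup.mk [a] * w).toWord = a :: w.toWord := by
  rw [toWord_cons]
  rcases hw : w.toWord with _ | ⟨hd, tl⟩
  · rfl
  · rw [hw] at h
    have hne : ¬(a.1 = hd.1 ∧ a.2 = !hd.2) := by
      rintro ⟨h1, h2⟩
      exact h (by simp only [List.head?_cons, Option.some_inj]; ext <;> simp [h1, h2])
    simp only [hne, if_false]

lemma toWord_cons_of_eq {a : Fin N × Bool} {tl} {w : FreeGroup (Fin N)}
    (hw : w.toWord = (a.1, !a.2) :: tl) :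
    (FreeGroup.mk [a] * w).toWord = tl := by
  rw [toWord_cons, hw]
  simp

lemma eq_mk_head_mul {v : FreeGroup (Fin N)} {hd tl} (h : v.toWord = hd :: tl) :
    v = FreeGroup.mk [hd] * FreeGroup.mk tl ∧ (FreeGroup.mk tl).toWord = tl := by
  have hred : FreeGroup.reduce (hd :: tl) = hd :: tl := by rw [← h]; exact v.reduce_toWord
  refine ⟨?_, by rw [FreeGroup.toWord_mk]; exact reduce_tail hred⟩
  conv_lhs => rw [← FreeGroup.mk_toWord (x := v), h]
  rw [show hd :: tl = [hd] ++ tl from rfl, ← FreeGroup.mul_mk]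

lemma mk_singleton_toWord (a : Fin N × Bool) : (FreeGroup.mk [a]).toWord = [a] := by
  rw [FreeGroup.toWord_mk, FreeGroup.reduce_singleton]

lemma X1_eq (N : ℕ) :
    Xop N 1 = ∑ a : Fin N × Bool, MonoidAlgebra.single (FreeGroup.mk [a]) (1:ℂ) := by
  rw [Xop_eq]
  rw [show S N 1 = Finset.univ.image (fun a : Fin N × Bool => FreeGroup.mk [a]) from ?_]
  · rw [Finset.sum_image]
    intro a _ b _ h
    have := congrArg FreeGroup.toWord h
    simpa [mk_singleton_toWord] using this
  · ext w
    simp only [mem_S, Finset.mem_image, Finset.mem_univ, true_and]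
    constructor
    · intro hw
      rcases List.length_eq_one_iff.mp hw with ⟨a, ha⟩
      exact ⟨a, by rw [← FreeGroup.mk_toWord (x := w), ha]⟩
    · rintro ⟨a, rfl⟩
      simp [mk_singleton_toWord]

lemma S_zero : S N 0 = {1} := by
  ext w
  simp [mem_S, List.length_eq_zero_iff, FreeGroup.toWord_eq_nil_iff]

lemma Xop_zero (N : ℕ) : Xop N 0 = 1 := by
  rw [Xop_eq, S_zero, Finset.sum_singleton, MonoidAlgebra.one_def]
open Finset MonoidAlgebra in
lemma sum_nocancel (N n : ℕ) :
    ∑ p ∈ (Finset.univ ×ˢ S N n).filter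
        (fun p : (Fin N × Bool) × FreeGroup (Fin N) =>
          ¬ p.2.toWord.head? = some (p.1.1, !p.1.2)),
      MonoidAlgebra.single (FreeGroup.mk [p.1] * p.2) (1:ℂ) = Xop N (n+1) := by
  rw [Xop_eq]
  refine Finset.sum_bij (fun p _ => FreeGroup.mk [p.1] * p.2) ?_ ?_ ?_ ?_
  · rintro ⟨a, w⟩ hp
    simp only [Finset.mem_filter, Finset.mem_product, Finset.mem_univ, true_and] at hp
    obtain ⟨hw, hne⟩ := hp
    rw [mem_S] at hw ⊢
    rw [toWord_cons_of_ne hne, List.length_cons, hw]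
  · rintro ⟨a, w⟩ hp ⟨b, v⟩ hq h
    simp only [Finset.mem_filter, Finset.mem_product, Finset.mem_univ, true_and] at hp hq
    have := congrArg FreeGroup.toWord h
    rw [toWord_cons_of_ne hp.2, toWord_cons_of_ne hq.2] at this
    obtain ⟨h1, h2⟩ := List.cons_eq_cons.mp this
    exact Prod.ext h1 (FreeGroup.toWord_injective h2)
  · intro v hv
    rw [mem_S] at hv
    rcases hl : v.toWord with _ | ⟨hd, tl⟩
    · rw [hl] at hv; simp at hv
    · obtain ⟨hdec, htl⟩ := eq_mk_head_mul hl
      refine ⟨⟨hd, FreeGroup.mk tl⟩, ?_, hdec.symm⟩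
      simp only [Finset.mem_filter, Finset.mem_product, Finset.mem_univ, true_and]
      constructor
      · rw [mem_S, htl]
        have := congrArg List.length hl
        simp only [List.length_cons] at this
        omega
      · rw [htl]
        rcases tl with _ | ⟨h2, t2⟩
        · simp
        · have hred : FreeGroup.reduce (hd :: h2 :: t2) = hd :: h2 :: t2 := by
            rw [← hl]; exact v.reduce_toWord
          have hnc := not_cancel_of_reduced hred
          simp only [List.head?_cons, ne_eq, Option.some_inj]
          rintro rfl
          exact hnc ⟨rfl, by simp⟩
  · intro p hp; rfl

open Finset MonoidAlgebra in
lemma sum_cancel (N n : ℕ) (hn : 1 ≤ n) :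
    ∑ p ∈ (Finset.univ ×ˢ S N n).filter
        (fun p : (Fin N × Bool) × FreeGroup (Fin N) =>
          p.2.toWord.head? = some (p.1.1, !p.1.2)),
      MonoidAlgebra.single (FreeGroup.mk [p.1] * p.2) (1:ℂ)
    = ∑ q ∈ (Finset.univ ×ˢ S N (n-1)).filter
        (fun q : (Fin N × Bool) × FreeGroup (Fin N) =>
          ¬ q.2.toWord.head? = some q.1),
      MonoidAlgebra.single q.2 (1:ℂ) := by
  refine Finset.sum_bij (fun p _ => (p.1, FreeGroup.mk [p.1] * p.2)) ?_ ?_ ?_ ?_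
  · rintro ⟨a, w⟩ hp
    simp only [Finset.mem_filter, Finset.mem_product, Finset.mem_univ, true_and] at hp ⊢
    obtain ⟨hw, hcan⟩ := hp
    rcases hl : w.toWord with _ | ⟨hd, tl⟩
    · rw [hl] at hcan; simp at hcan
    · rw [hl, List.head?_cons, Option.some_inj] at hcan
      subst hcan
      have htw := toWord_cons_of_eq hl
      rw [mem_S] at hw
      rw [hl, List.length_cons] at hw
      constructor
      · rw [mem_S, htw]; omega
      · rw [htw]
        rcases tl with _ | ⟨h2, t2⟩
        · simp
        · have hred : FreeGroup.reduce ((a.1, !a.2) :: h2 :: t2) = (a.1, !a.2) :: h2 :: t2 := by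
            rw [← hl]; exact w.reduce_toWord
          have hnc := not_cancel_of_reduced hred
          simp only [List.head?_cons, ne_eq, Option.some_inj]
          rintro rfl
          exact hnc ⟨rfl, by simp⟩
  · rintro ⟨a, w⟩ hp ⟨b, v⟩ hq h
    have h1 : a = b := congrArg Prod.fst h
    subst h1
    have h2 : FreeGroup.mk [a] * w = FreeGroup.mk [a] * v := congrArg Prod.snd h
    exact Prod.ext rfl (mul_left_cancel h2)
  · rintro ⟨a, v⟩ hq
    simp only [Finset.mem_filter, Finset.mem_product, Finset.mem_univ, true_and] at hq
    obtain ⟨hv, hne⟩ := hq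
    set w := FreeGroup.mk [(a.1, !a.2)] * v with hwdef
    have hvne : v.toWord.head? ≠ some ((a.1, !a.2).1, !(a.1, !a.2).2) := by
      simpa using hne
    have hwtw : w.toWord = (a.1, !a.2) :: v.toWord := toWord_cons_of_ne hvne
    refine ⟨⟨a, w⟩, ?_, ?_⟩
    · simp only [Finset.mem_filter, Finset.mem_product, Finset.mem_univ, true_and]
      rw [mem_S] at hv
      exact ⟨by rw [mem_S, hwtw, List.length_cons, hv]; omega,
        by rw [hwtw, List.head?_cons]⟩
    · have : (FreeGroup.mk [a] * w).toWord = v.toWord := toWord_cons_of_eq hwtw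
      exact Prod.ext rfl (FreeGroup.toWord_injective this)
  · intro p hp; rfl
open Finset MonoidAlgebra in
lemma X1_mul_split (N n : ℕ) (hn : 1 ≤ n) :
    Xop N 1 * Xop N n = Xop N (n+1) +
      ∑ q ∈ (Finset.univ ×ˢ S N (n-1)).filter
          (fun q : (Fin N × Bool) × FreeGroup (Fin N) => ¬ q.2.toWord.head? = some q.1),
        MonoidAlgebra.single q.2 (1:ℂ) := by
  rw [X1_eq, Xop_eq, Finset.sum_mul_sum]
  simp_rw [MonoidAlgebra.single_mul_single, one_mul]
  rw [← Finset.sum_product']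
  rw [← Finset.sum_filter_add_sum_filter_not (Finset.univ ×ˢ S N n)
    (fun p : (Fin N × Bool) × FreeGroup (Fin N) => p.2.toWord.head? = some (p.1.1, !p.1.2))]
  rw [add_comm, sum_nocancel, sum_cancel N n hn]

open Finset MonoidAlgebra in
lemma cancel_eval (N m : ℕ) (hm : 1 ≤ m) :
    ∑ q ∈ (Finset.univ ×ˢ S N m).filter
        (fun q : (Fin N × Bool) × FreeGroup (Fin N) => ¬ q.2.toWord.head? = some q.1),
      MonoidAlgebra.single q.2 (1:ℂ) = (2*N-1) • Xop N m := by
  rw [Xop_eq, Finset.smul_sum, Finset.sum_filter, Finset.sum_product_right]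
  refine Finset.sum_congr rfl ?_
  intro v hv
  rw [mem_S] at hv
  rcases hl : v.toWord with _ | ⟨hd, tl⟩
  · rw [hl] at hv; simp at hv; omega
  · have hcond : ∀ a : Fin N × Bool, (¬ v.toWord.head? = some a) ↔ a ≠ hd := by
      intro a; rw [hl]; simp [eq_comm]
    calc (∑ a : Fin N × Bool, if ¬ v.toWord.head? = some a then MonoidAlgebra.single v (1:ℂ) else 0)
        = ∑ a ∈ Finset.univ.filter (fun a : Fin N × Bool => a ≠ hd),
            MonoidAlgebra.single v (1:ℂ) := by
          rw [Finset.sum_filter]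
          exact Finset.sum_congr rfl (fun a _ => by rw [if_congr (hcond a) rfl rfl])
      _ = (2*N-1) • MonoidAlgebra.single v (1:ℂ) := by
          rw [Finset.sum_const]
          congr 1
          rw [Finset.filter_ne', Finset.card_erase_of_mem (Finset.mem_univ _)]
          simp only [Finset.card_univ, Fintype.card_prod, Fintype.card_fin, Fintype.card_bool]
          omega

open Finset MonoidAlgebra in
lemma cancel_eval_zero (N : ℕ) :
    ∑ q ∈ (Finset.univ ×ˢ S N 0).filter
        (fun q : (Fin N × Bool) × FreeGroup (Fin N) => ¬ q.2.toWord.head? = some q.1),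
      MonoidAlgebra.single q.2 (1:ℂ) = (2*N) • Xop N 0 := by
  rw [S_zero, Finset.filter_true_of_mem ?_]
  · rw [Finset.sum_product_right, Finset.sum_singleton]
    show (∑ _x : Fin N × Bool, MonoidAlgebra.single (1 : FreeGroup (Fin N)) (1:ℂ)) = _
    rw [Finset.sum_const, Xop_zero, MonoidAlgebra.one_def]
    congr 1
    simp only [Finset.card_univ, Fintype.card_prod, Fintype.card_fin, Fintype.card_bool]
    omega
  · rintro ⟨a, w⟩ hq
    simp only [Finset.mem_product, Finset.mem_singleton] at hq
    rw [hq.2, FreeGroup.toWord_one]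
    simp

lemma rec_big (N n : ℕ) (hn : 2 ≤ n) :
    Xop N 1 * Xop N n = Xop N (n+1) + (2*N-1) • Xop N (n-1) := by
  rw [X1_mul_split N n (by omega), cancel_eval N (n-1) (by omega)]

lemma rec_one (N : ℕ) :
    Xop N 1 * Xop N 1 = Xop N 2 + (2*N) • Xop N 0 := by
  rw [X1_mul_split N 1 le_rfl, cancel_eval_zero]
lemma pascal_sum {M : Type*} [AddCommMonoid M] (m c : ℕ) (f : ℕ → M) :
    (∑ i ∈ Finset.range (m+1), (m.choose i * c^i) • f i)
      + ∑ i ∈ Finset.range (m+1), (m.choose i * c^(i+1)) • f (i+1)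
    = ∑ i ∈ Finset.range (m+2), ((m+1).choose i * c^i) • f i := by
  rw [Finset.sum_range_succ' (fun i => ((m+1).choose i * c^i) • f i) (m+1)]
  rw [Finset.sum_range_succ' (fun i => (m.choose i * c^i) • f i) m]
  have hz : (∑ i ∈ Finset.range (m+1), (m.choose (i+1) * c^(i+1)) • f (i+1))
      = ∑ i ∈ Finset.range m, (m.choose (i+1) * c^(i+1)) • f (i+1) := by
    rw [Finset.sum_range_succ, Nat.choose_succ_self]
    simp
  simp_rw [Nat.choose_succ_succ, Nat.add_mul, add_smul]
  rw [Finset.sum_add_distrib, ← hz]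
  simp only [Nat.choose_zero_right, pow_zero, mul_one, one_smul]
  abel

lemma powA (N : ℕ) : ∀ m n : ℕ, m < n →
    (Xop N 1)^m * Xop N n
      = ∑ i ∈ Finset.range (m+1), (m.choose i * (2*N-1)^i) • Xop N (n + m - 2*i) := by
  intro m
  induction m with
  | zero => intro n hn; simp
  | succ m ih =>
    intro n hn
    rw [pow_succ', mul_assoc, ih n (by omega), Finset.mul_sum]
    have step : ∀ i ∈ Finset.range (m+1),
        Xop N 1 * ((m.choose i * (2*N-1)^i) • Xop N (n + m - 2*i))
          = (m.choose i * (2*N-1)^i) • Xop N (n + (m+1) - 2*i)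
            + (m.choose i * (2*N-1)^(i+1)) • Xop N (n + (m+1) - 2*(i+1)) := by
      intro i hi
      rw [Finset.mem_range] at hi
      have e1 : n + m - 2*i + 1 = n + (m+1) - 2*i := by omega
      have e2 : n + m - 2*i - 1 = n + (m+1) - 2*(i+1) := by omega
      rw [mul_smul_comm, rec_big N (n+m-2*i) (by omega), e1, e2, smul_add, smul_smul,
        show m.choose i * (2*N-1)^i * (2*N-1) = m.choose i * (2*N-1)^(i+1) by ring]
    rw [Finset.sum_congr rfl step, Finset.sum_add_distrib]
    have hP := pascal_sum (M := MonoidAlgebra ℂ (FreeGroup (Fin N))) m (2*N-1)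
      (fun j => Xop N (n + (m+1) - 2*j))
    exact hP

lemma powB (N n : ℕ) (hn : 1 ≤ n) :
    (Xop N 1)^n * Xop N n
      = ∑ i ∈ Finset.range n, (n.choose i * (2*N-1)^i) • Xop N (2*n - 2*i)
        + (2*N*(2*N-1)^(n-1)) • Xop N 0 := by
  obtain ⟨m, rfl⟩ : ∃ m, n = m + 1 := ⟨n-1, by omega⟩
  rw [pow_succ', mul_assoc, powA N m (m+1) (by omega), Finset.mul_sum,
    Finset.sum_range_succ]
  have hlast : Xop N 1 * ((m.choose m * (2*N-1)^m) • Xop N (m+1+m-2*m))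
      = (m.choose m * (2*N-1)^m) • Xop N 2
        + (2*N*(2*N-1)^(m+1-1)) • Xop N 0 := by
    rw [show m+1+m-2*m = 1 by omega, mul_smul_comm, rec_one, smul_add, smul_smul,
      show m.choose m * (2*N-1)^m * (2*N) = 2*N*(2*N-1)^(m+1-1) by
        simp [Nat.choose_self]; ring]
  have hstep : ∀ i ∈ Finset.range m,
      Xop N 1 * ((m.choose i * (2*N-1)^i) • Xop N (m+1+m-2*i))
        = (m.choose i * (2*N-1)^i) • Xop N (2*(m+1) - 2*i)
          + (m.choose i * (2*N-1)^(i+1)) • Xop N (2*(m+1) - 2*(i+1)) := by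
    intro i hi
    rw [Finset.mem_range] at hi
    have e1 : m+1+m-2*i + 1 = 2*(m+1) - 2*i := by omega
    have e2 : m+1+m-2*i - 1 = 2*(m+1) - 2*(i+1) := by omega
    rw [mul_smul_comm, rec_big N (m+1+m-2*i) (by omega), e1, e2, smul_add, smul_smul,
      show m.choose i * (2*N-1)^i * (2*N-1) = m.choose i * (2*N-1)^(i+1) by ring]
  rw [Finset.sum_congr rfl hstep, Finset.sum_add_distrib, hlast]
  apply add_right_cancel (b := (m.choose m * (2*N-1)^(m+1)) • Xop N 0)
  have hA : (∑ i ∈ Finset.range m, (m.choose i * (2*N-1)^i) • Xop N (2*(m+1) - 2*i))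
      + (m.choose m * (2*N-1)^m) • Xop N 2
      = ∑ i ∈ Finset.range (m+1), (m.choose i * (2*N-1)^i) • Xop N (2*(m+1) - 2*i) := by
    rw [Finset.sum_range_succ, show 2*(m+1)-2*m = 2 by omega]
  have hB : (∑ i ∈ Finset.range m, (m.choose i * (2*N-1)^(i+1)) • Xop N (2*(m+1) - 2*(i+1)))
      + (m.choose m * (2*N-1)^(m+1)) • Xop N 0
      = ∑ i ∈ Finset.range (m+1), (m.choose i * (2*N-1)^(i+1)) • Xop N (2*(m+1) - 2*(i+1)) := by
    rw [Finset.sum_range_succ, show 2*(m+1)-2*(m+1) = 0 by omega]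
  have hP := pascal_sum (M := MonoidAlgebra ℂ (FreeGroup (Fin N))) m (2*N-1)
    (fun j => Xop N (2*(m+1) - 2*j))
  have hR : (∑ i ∈ Finset.range (m+2), ((m+1).choose i * (2*N-1)^i) • Xop N (2*(m+1)-2*i))
      = (∑ i ∈ Finset.range (m+1), ((m+1).choose i * (2*N-1)^i) • Xop N (2*(m+1)-2*i))
        + (m.choose m * (2*N-1)^(m+1)) • Xop N 0 := by
    rw [Finset.sum_range_succ, show 2*(m+1)-2*(m+1) = 0 by omega,
      show (m+1).choose (m+1) = m.choose m by simp [Nat.choose_self]]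
  calc (∑ i ∈ Finset.range m, (m.choose i * (2*N-1)^i) • Xop N (2*(m+1) - 2*i))
        + (∑ i ∈ Finset.range m, (m.choose i * (2*N-1)^(i+1)) • Xop N (2*(m+1) - 2*(i+1)))
        + ((m.choose m * (2*N-1)^m) • Xop N 2 + (2*N*(2*N-1)^(m+1-1)) • Xop N 0)
        + (m.choose m * (2*N-1)^(m+1)) • Xop N 0
      = ((∑ i ∈ Finset.range m, (m.choose i * (2*N-1)^i) • Xop N (2*(m+1) - 2*i))
          + (m.choose m * (2*N-1)^m) • Xop N 2)
        + ((∑ i ∈ Finset.range m, (m.choose i * (2*N-1)^(i+1)) • Xop N (2*(m+1) - 2*(i+1)))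
          + (m.choose m * (2*N-1)^(m+1)) • Xop N 0)
        + (2*N*(2*N-1)^(m+1-1)) • Xop N 0 := by abel
    _ = (∑ i ∈ Finset.range (m+2), ((m+1).choose i * (2*N-1)^i) • Xop N (2*(m+1)-2*i))
        + (2*N*(2*N-1)^(m+1-1)) • Xop N 0 := by rw [hA, hB, hP]
    _ = (∑ i ∈ Finset.range (m+1), ((m+1).choose i * (2*N-1)^i) • Xop N (2*(m+1)-2*i))
        + (2*N*(2*N-1)^(m+1-1)) • Xop N 0
        + (m.choose m * (2*N-1)^(m+1)) • Xop N 0 := by rw [hR]; abel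
lemma tr_add {N : ℕ} (a b : MonoidAlgebra ℂ (FreeGroup (Fin N))) :
    tr (a + b) = tr a + tr b := Finsupp.add_apply a.coeff b.coeff 1

lemma tr_sum {N : ℕ} {ι : Type*} (s : Finset ι)
    (f : ι → MonoidAlgebra ℂ (FreeGroup (Fin N))) :
    tr (∑ i ∈ s, f i) = ∑ i ∈ s, tr (f i) := by
  rw [tr, MonoidAlgebra.coeff_sum]
  exact map_sum (Finsupp.applyAddHom (M := ℂ) (1 : FreeGroup (Fin N))) (fun i => (f i).coeff) s

lemma tr_nsmul {N : ℕ} (c : ℕ) (a : MonoidAlgebra ℂ (FreeGroup (Fin N))) :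
    tr (c • a) = (c : ℂ) * tr a := by
  rw [← Nat.cast_smul_eq_nsmul ℂ c a, tr, tr, MonoidAlgebra.coeff_smul, Finsupp.smul_apply, smul_eq_mul]

lemma supp_pow_X1 (N : ℕ) : ∀ m : ℕ, ∀ v ∈ ((Xop N 1)^m).coeff.support,
    v.toWord.length ≤ m := by
  intro m
  induction m with
  | zero =>
    intro v hv
    rw [pow_zero, MonoidAlgebra.one_def, MonoidAlgebra.coeff_single] at hv
    have := Finsupp.support_single_subset hv
    rw [Finset.mem_singleton] at this
    subst this
    simp [FreeGroup.toWord_one]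
  | succ m ih =>
    intro v hv
    rw [pow_succ'] at hv
    have hsub := MonoidAlgebra.support_coeff_mul_subset (Xop N 1) ((Xop N 1)^m) hv
    rw [Finset.mem_mul] at hsub
    obtain ⟨a, ha, b, hb, rfl⟩ := hsub
    have ha1 : a.toWord.length = 1 := by
      rw [Xop_eq, MonoidAlgebra.coeff_sum] at ha
      have := Finsupp.support_finset_sum ha
      rw [Finset.mem_biUnion] at this
      obtain ⟨w, hw, haw⟩ := this
      rw [MonoidAlgebra.coeff_single] at haw
      have := Finsupp.support_single_subset haw
      rw [Finset.mem_singleton] at this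
      subst this
      exact mem_S.mp hw
    have hb1 := ih b hb
    calc (a * b).toWord.length ≤ a.toWord.length + b.toWord.length :=
          FreeGroup.norm_mul_le a b
      _ ≤ 1 + m := by omega
      _ = m + 1 := by omega

lemma tr_vanish (N m n : ℕ) (h : m < n) : tr ((Xop N 1)^m * Xop N n) = 0 := by
  rw [Xop_eq N n, Finset.mul_sum, tr_sum]
  apply Finset.sum_eq_zero
  intro w hw
  rw [tr, MonoidAlgebra.coeff_mul_single_apply, mul_one]
  by_contra hne
  have hmem : (1 * w⁻¹ : FreeGroup (Fin N)) ∈ ((Xop N 1)^m).coeff.support :=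
    Finsupp.mem_support_iff.mpr hne
  have hlen := supp_pow_X1 N m _ hmem
  rw [one_mul] at hlen
  have : (w⁻¹ : FreeGroup (Fin N)).toWord.length = n := by
    have := mem_S.mp hw
    simpa [FreeGroup.toWord_inv, FreeGroup.invRev_length] using this
  omega
end Stmt10

theorem stmt_10 (N : ℕ) (hN : 1 ≤ N) (k n k' : ℕ) (hn : 1 ≤ n)
    (hk : k = n + k') (hk' : k' < 2 * n) :
    tr ((Xop N 1) ^ k * Xop N n) =
      (∑ i ∈ (Finset.Icc 1 (n - 1)).filter (fun i => 2 * n - 2 * i ≤ k'),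
        (n.choose i * (2 * N - 1) ^ i : ℕ) * tr ((Xop N 1) ^ k' * Xop N (2 * n - 2 * i)))
      + (2 * N * (2 * N - 1) ^ (n - 1) : ℕ) * tr ((Xop N 1) ^ k') := by
  subst hk
  rw [show n + k' = k' + n from Nat.add_comm n k', pow_add, mul_assoc,
    Stmt10.powB N n hn, mul_add, Finset.mul_sum, Stmt10.tr_add, Stmt10.tr_sum,
    mul_smul_comm, Stmt10.Xop_zero, mul_one, Stmt10.tr_nsmul]
  have hterm : ∀ i ∈ Finset.range n,
      tr ((Xop N 1)^k' * ((n.choose i * (2*N-1)^i) • Xop N (2*n-2*i)))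
        = ((n.choose i * (2*N-1)^i : ℕ) : ℂ) * tr ((Xop N 1)^k' * Xop N (2*n-2*i)) := by
    intro i _
    rw [mul_smul_comm, Stmt10.tr_nsmul]
  rw [Finset.sum_congr rfl hterm]
  congr 1
  refine (Finset.sum_subset ?_ ?_).symm
  · intro i hi
    simp only [Finset.mem_filter, Finset.mem_Icc] at hi
    rw [Finset.mem_range]; omega
  · intro i hi hni
    rw [Finset.mem_range] at hi
    simp only [Finset.mem_filter, Finset.mem_Icc] at hni
    push_neg at hni
    have hv : k' < 2*n - 2*i := by
      rcases Nat.eq_zero_or_pos i with rfl | h1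
      · omega
      · exact hni ⟨h1, by omega⟩
    rw [Stmt10.tr_vanish N k' (2*n-2*i) hv, mul_zero]
end

section
/- In the complex group algebra of the free group F_N on N ≥ 1 generators, for all k ≥ 0 and n ≥ 1 one has x^k · X_n = X_n · x^k, where x = X_1 is the generating operator. -/
namespace Stmt12Aux

variable {N : ℕ}

/-- the single-letter element -/
noncomputable def m (N : ℕ) (p : Fin N × Bool) : FreeGroup (Fin N) := FreeGroup.mk [p]

lemma toWord_m (p : Fin N × Bool) : (m N p).toWord = [p] := by
  rw [m, FreeGroup.toWord_mk, FreeGroup.reduce_singleton]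

lemma m_inj : Function.Injective (m N) := by
  intro p q h
  simpa [toWord_m] using congrArg FreeGroup.toWord h

lemma inv_m (p : Fin N × Bool) : (m N p)⁻¹ = m N (p.1, !p.2) := by
  obtain ⟨a, b⟩ := p
  rw [m, FreeGroup.inv_mk]
  rfl

lemma toWord_m_mul (p : Fin N × Bool) (u : FreeGroup (Fin N)) :
    (m N p * u).toWord = FreeGroup.reduce (p :: u.toWord) := by
  conv_lhs => rw [← FreeGroup.mk_toWord (x := u)]
  rw [m, FreeGroup.mul_mk, FreeGroup.toWord_mk, List.singleton_append]

lemma len_inv (u : FreeGroup (Fin N)) : (u⁻¹).toWord.length = u.toWord.length := by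
  rw [FreeGroup.toWord_inv, FreeGroup.invRev_length]

lemma len_m_mul_nil (p : Fin N × Bool) {u : FreeGroup (Fin N)} (h : u.toWord = []) :
    (m N p * u).toWord.length = 1 := by
  rw [toWord_m_mul, h, FreeGroup.reduce_singleton]
  rfl

lemma len_m_mul_cons (p hd : Fin N × Bool) (tl : List (Fin N × Bool))
    {u : FreeGroup (Fin N)} (h : u.toWord = hd :: tl) :
    (m N p * u).toWord.length =
      if p = (hd.1, !hd.2) then tl.length else tl.length + 2 := by
  have hr : FreeGroup.reduce (hd :: tl) = hd :: tl := by
    rw [← h]; exact u.reduce_toWord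
  rw [toWord_m_mul, h, FreeGroup.reduce.cons, hr]
  obtain ⟨a, b⟩ := p
  obtain ⟨c, d⟩ := hd
  simp only [Prod.mk.injEq]
  split_ifs with h1
  · rfl
  · simp

/-- the count function -/
noncomputable def lcf (N m n : ℕ) : ℂ :=
  if m = 0 then (if n = 1 then (2 * N : ℂ) else 0)
  else if n = m + 1 then (2 * N - 1 : ℂ)
  else if n + 1 = m then 1 else 0

lemma lcf_def (N m n : ℕ) : lcf N m n =
    if m = 0 then (if n = 1 then (2 * N : ℂ) else 0)
    else if n = m + 1 then (2 * N - 1 : ℂ)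
    else if n + 1 = m then 1 else 0 := rfl

lemma card_univ_prod : (Finset.univ : Finset (Fin N × Bool)).card = 2 * N := by
  simp [Finset.card_univ, mul_comm]

lemma count_left (u : FreeGroup (Fin N)) (n : ℕ) :
    (∑ p : Fin N × Bool, if (m N p * u).toWord.length = n then (1 : ℂ) else 0)
      = lcf N u.toWord.length n := by
  rcases h : u.toWord with _ | ⟨hd, tl⟩
  · simp only [len_m_mul_nil _ h, lcf_def, List.length_nil, if_pos rfl]
    by_cases hn : n = 1
    · subst hn
      simp only [if_pos rfl, Finset.sum_const, card_univ_prod, nsmul_eq_mul, mul_one]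
      push_cast
      ring
    · simp [Ne.symm hn, hn]
  · have hN1 : 1 ≤ N := hd.1.pos
    have hcard : ((Finset.univ : Finset (Fin N × Bool)).erase (hd.1, !hd.2)).card
        = 2 * N - 1 := by
      rw [Finset.card_erase_of_mem (Finset.mem_univ _), card_univ_prod]
    simp only [len_m_mul_cons _ hd tl h, lcf_def, h, List.length_cons]
    rw [← Finset.add_sum_erase _ _ (Finset.mem_univ (hd.1, !hd.2))]
    rw [if_pos rfl]
    have hrest : ∀ p ∈ (Finset.univ : Finset (Fin N × Bool)).erase (hd.1, !hd.2),
        (if (if p = (hd.1, !hd.2) then tl.length else tl.length + 2) = n then (1 : ℂ) else 0)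
          = if tl.length + 2 = n then (1 : ℂ) else 0 := by
      intro p hp
      rw [if_neg (Finset.ne_of_mem_erase hp)]
    rw [Finset.sum_congr rfl hrest, Finset.sum_const, hcard]
    have h2N : (1 : ℕ) ≤ 2 * N := by omega
    by_cases h1 : tl.length = n <;> by_cases h2 : tl.length + 2 = n
    · omega
    · rw [if_pos h1, if_neg h2, if_neg (by omega), if_neg (by omega), if_pos (by omega)]
      simp
    · rw [if_neg h1, if_pos h2, if_neg (by omega), if_pos (by omega)]
      simp only [if_pos rfl, zero_add, nsmul_eq_mul, mul_one, Nat.cast_sub h2N]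
      push_cast
      ring
    · rw [if_neg h1, if_neg h2, if_neg (by omega), if_neg (by omega), if_neg (by omega)]
      simp

/-- boolean-flip permutation -/
noncomputable def flipPerm (N : ℕ) : Equiv.Perm (Fin N × Bool) :=
  Function.Involutive.toPerm (fun p => (p.1, !p.2)) (by intro p; simp)

lemma flip_reindex (f : Fin N × Bool → ℂ) :
    (∑ p : Fin N × Bool, f (p.1, !p.2)) = ∑ p : Fin N × Bool, f p :=
  Equiv.sum_comp (flipPerm N) f

lemma count_right (u : FreeGroup (Fin N)) (n : ℕ) :
    (∑ p : Fin N × Bool, if (u * m N p).toWord.length = n then (1 : ℂ) else 0)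
      = lcf N u.toWord.length n := by
  have key : ∀ p : Fin N × Bool,
      (u * m N p).toWord.length = (m N (p.1, !p.2) * u⁻¹).toWord.length := by
    intro p
    rw [← len_inv (u * m N p), mul_inv_rev, inv_m]
  calc (∑ p : Fin N × Bool, if (u * m N p).toWord.length = n then (1 : ℂ) else 0)
      = ∑ p : Fin N × Bool,
          if (m N (p.1, !p.2) * u⁻¹).toWord.length = n then (1 : ℂ) else 0 := by
        simp_rw [key]
    _ = ∑ p : Fin N × Bool,
          if (m N p * u⁻¹).toWord.length = n then (1 : ℂ) else 0 :=
        flip_reindex (fun p => if (m N p * u⁻¹).toWord.length = n then (1 : ℂ) else 0)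
    _ = lcf N (u⁻¹).toWord.length n := count_left u⁻¹ n
    _ = lcf N u.toWord.length n := by rw [len_inv]

lemma fin_sph (N n : ℕ) : {w : FreeGroup (Fin N) | w.toWord.length = n}.Finite := by
  have hsub : {w : FreeGroup (Fin N) | w.toWord.length = n}
      ⊆ FreeGroup.toWord ⁻¹' {l : List (Fin N × Bool) | l.length = n} := fun w hw => hw
  exact Set.Finite.subset
    ((List.finite_length_eq _ n).preimage FreeGroup.toWord_injective.injOn) hsub

/-- the sphere of radius `n` as a finset -/
noncomputable def sph (N n : ℕ) : Finset (FreeGroup (Fin N)) := (fin_sph N n).toFinset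

lemma mem_sph {n : ℕ} {w : FreeGroup (Fin N)} : w ∈ sph N n ↔ w.toWord.length = n := by
  rw [sph, Set.Finite.mem_toFinset]; rfl

lemma Xop_eq (n : ℕ) :
    Xop N n = ∑ w ∈ sph N n, MonoidAlgebra.single w (1 : ℂ) := by
  rw [Xop]
  have hset : {w : FreeGroup (Fin N) | (FreeGroup.toWord w).length = n} = ↑(sph N n) := by
    rw [sph, Set.Finite.coe_toFinset]
  rw [hset, finsum_mem_coe_finset]
  exact Finset.sum_congr rfl fun w _ => rfl

lemma sph_one : sph N 1 = Finset.univ.image (m N) := by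
  ext w
  rw [mem_sph, Finset.mem_image]
  constructor
  · intro hw
    obtain ⟨p, hp⟩ := List.length_eq_one_iff.mp hw
    exact ⟨p, Finset.mem_univ _, by rw [m, ← hp, FreeGroup.mk_toWord]⟩
  · rintro ⟨p, -, rfl⟩
    rw [toWord_m]
    rfl

lemma Xop_one :
    Xop N 1 = ∑ p : Fin N × Bool, MonoidAlgebra.single (m N p) (1 : ℂ) := by
  rw [Xop_eq, sph_one, Finset.sum_image (fun a _ b _ h => m_inj h)]

lemma coeff_left (n : ℕ) (u : FreeGroup (Fin N)) :
    (Xop N 1 * Xop N n).coeff u = lcf N u.toWord.length n := by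
  rw [Xop_one, Xop_eq n, Finset.sum_mul_sum]
  simp_rw [MonoidAlgebra.single_mul_single, one_mul]
  rw [MonoidAlgebra.coeff_sum, Finsupp.finset_sum_apply]
  have step : ∀ p : Fin N × Bool,
      (∑ w ∈ sph N n, MonoidAlgebra.single (m N p * w) (1 : ℂ)).coeff u
        = if (m N (p.1, !p.2) * u).toWord.length = n then (1 : ℂ) else 0 := by
    intro p
    rw [MonoidAlgebra.coeff_sum, Finsupp.finset_sum_apply]
    have hterm : ∀ w ∈ sph N n, (MonoidAlgebra.single (m N p * w) (1 : ℂ)).coeff u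
        = if w = (m N p)⁻¹ * u then (1 : ℂ) else 0 := by
      intro w _
      rw [MonoidAlgebra.coeff_single, Finsupp.single_apply]
      congr 1
      simp only [eq_iff_iff]
      constructor
      · intro h; rw [← h, inv_mul_cancel_left]
      · intro h; rw [h, mul_inv_cancel_left]
    rw [Finset.sum_congr rfl hterm,
      Finset.sum_ite_eq' (sph N n) ((m N p)⁻¹ * u) (fun _ => (1 : ℂ))]
    congr 1
    simp only [eq_iff_iff]
    rw [mem_sph, inv_m]
  rw [Finset.sum_congr rfl (fun p _ => step p), ← count_left u n]
  exact flip_reindex (fun q => if (m N q * u).toWord.length = n then (1 : ℂ) else 0)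

lemma coeff_right (n : ℕ) (u : FreeGroup (Fin N)) :
    (Xop N n * Xop N 1).coeff u = lcf N u.toWord.length n := by
  rw [Xop_eq n, Xop_one, Finset.sum_mul_sum]
  simp_rw [MonoidAlgebra.single_mul_single, one_mul]
  rw [Finset.sum_comm, MonoidAlgebra.coeff_sum, Finsupp.finset_sum_apply]
  have inner : ∀ p : Fin N × Bool,
      (∑ w ∈ sph N n, MonoidAlgebra.single (w * m N p) (1 : ℂ)).coeff u
        = if (u * m N (p.1, !p.2)).toWord.length = n then (1 : ℂ) else 0 := by
    intro p
    rw [MonoidAlgebra.coeff_sum, Finsupp.finset_sum_apply]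
    have hterm : ∀ w ∈ sph N n, (MonoidAlgebra.single (w * m N p) (1 : ℂ)).coeff u
        = if w = u * (m N p)⁻¹ then (1 : ℂ) else 0 := by
      intro w _
      rw [MonoidAlgebra.coeff_single, Finsupp.single_apply]
      congr 1
      simp only [eq_iff_iff]
      constructor
      · intro h; rw [← h, mul_inv_cancel_right]
      · intro h; rw [h, inv_mul_cancel_right]
    rw [Finset.sum_congr rfl hterm,
      Finset.sum_ite_eq' (sph N n) (u * (m N p)⁻¹) (fun _ => (1 : ℂ))]
    congr 1
    simp only [eq_iff_iff]
    rw [mem_sph, inv_m]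
  rw [Finset.sum_congr rfl (fun p _ => inner p), ← count_right u n]
  exact flip_reindex (fun q => if (u * m N q).toWord.length = n then (1 : ℂ) else 0)

lemma commute_X (n : ℕ) : Commute (Xop N 1) (Xop N n) := by
  unfold Commute SemiconjBy
  exact MonoidAlgebra.ext <| Finsupp.ext fun u => by rw [coeff_left, coeff_right]

end Stmt12Aux

theorem stmt_12 (N : ℕ) (hN : 1 ≤ N) (k n : ℕ) (hn : 1 ≤ n) :
    (Xop N 1) ^ k * Xop N n = Xop N n * (Xop N 1) ^ k := by
  exact ((Stmt12Aux.commute_X n).pow_left k)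
end

section
/- Let x = X_1 be the generating operator of the complex group algebra of the free group F_N on N ≥ 1 generators, and let τ be the canonical trace (coefficient at the identity). For every m ≥ 1 and all sequences k_1, …, k_m ≥ 0 and n_1, …, n_m ≥ 1, τ( x^{k_1}·X_{n_1}·x^{k_2}·X_{n_2}···x^{k_m}·X_{n_m} ) = τ( x^{k_1+⋯+k_m} · X_{n_1}·X_{n_2}···X_{n_m} ). -/
namespace St15

open FreeGroup

variable {N : ℕ}

lemma setFinite (N n : ℕ) : {w : FreeGroup (Fin N) | (toWord w).length = n}.Finite := by
  apply Set.Finite.of_finite_image (f := toWord) ?_ toWord_injective.injOn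
  apply (List.finite_length_eq _ n).subset
  rintro L ⟨w, hw, rfl⟩; exact hw

noncomputable def T (N n : ℕ) : Finset (FreeGroup (Fin N)) := (setFinite N n).toFinset

def gen (p : Fin N × Bool) : FreeGroup (Fin N) := FreeGroup.mk [p]

@[simp] lemma toWord_gen (p : Fin N × Bool) : toWord (gen p) = [p] := by
  rw [gen, toWord_mk, reduce_singleton]

lemma gen_inj : Function.Injective (gen (N := N)) := by
  intro p q h
  have := congrArg toWord h
  simpa using this

lemma inv_gen (p : Fin N × Bool) : (gen p)⁻¹ = gen (p.1, !p.2) := by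
  rw [gen, inv_mk, invRev]
  simp [gen]

lemma Xop_eq (N n : ℕ) :
    Xop N n = ∑ w ∈ T N n, MonoidAlgebra.single w (1 : ℂ) := by
  rw [Xop, ← (setFinite N n).coe_toFinset, finsum_mem_coe_finset]
  rfl

lemma Xop_apply (N n : ℕ) (h : FreeGroup (Fin N)) :
    (∑ w ∈ T N n, MonoidAlgebra.single w (1 : ℂ)).coeff h
      = if (toWord h).length = n then 1 else 0 := by
  rw [MonoidAlgebra.coeff_sum, Finsupp.finset_sum_apply]
  have : ∀ w ∈ T N n, (MonoidAlgebra.single w (1:ℂ)).coeff h = if w = h then 1 else 0 := by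
    intro w _; rw [MonoidAlgebra.coeff_single, Finsupp.single_apply]
  rw [Finset.sum_congr rfl this, Finset.sum_ite_eq' (T N n) h (fun _ => (1:ℂ))]
  simp [T, Set.Finite.mem_toFinset]

lemma T1_eq (N : ℕ) : T N 1 = Finset.univ.image (gen (N := N)) := by
  ext w
  simp only [T, Set.Finite.mem_toFinset, Set.mem_setOf_eq, Finset.mem_image, Finset.mem_univ,
    true_and]
  constructor
  · intro hw
    obtain ⟨p, hp⟩ := List.length_eq_one_iff.mp hw
    exact ⟨p, by rw [← mk_toWord (x := w), hp]; rfl⟩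
  · rintro ⟨p, rfl⟩; simp

lemma X1_eq (N : ℕ) :
    (∑ w ∈ T N 1, MonoidAlgebra.single w (1 : ℂ))
      = ∑ p : Fin N × Bool, MonoidAlgebra.single (gen p) (1 : ℂ) := by
  rw [T1_eq, Finset.sum_image (fun x _ y _ h => gen_inj h)]

noncomputable def cnt (N l n : ℕ) : ℂ :=
  if l = 0 then (if 1 = n then ((2*N : ℕ) : ℂ) else 0)
  else (if l - 1 = n then 1 else 0) + (((2*N : ℕ) : ℂ) - 1) * (if l + 1 = n then 1 else 0)

lemma toWord_gen_mul (p : Fin N × Bool) (h : FreeGroup (Fin N)) :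
    toWord (gen p * h) =
      List.casesOn (toWord h) [p] fun q L =>
        if p.1 = q.1 ∧ p.2 = !q.2 then L else p :: q :: L := by
  conv_lhs => rw [← mk_toWord (x := h)]
  rw [gen, mul_mk, List.singleton_append, toWord_mk, reduce.cons, reduce_toWord]

lemma count_eq (N n : ℕ) (h : FreeGroup (Fin N)) :
    ∑ p : Fin N × Bool, (if (toWord (gen p * h)).length = n then (1:ℂ) else 0)
      = cnt N (toWord h).length n := by
  have hcard : Fintype.card (Fin N × Bool) = 2 * N := by simp [mul_comm]
  rcases hL : toWord h with _ | ⟨q, L⟩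
  · have : ∀ p : Fin N × Bool, (if (toWord (gen p * h)).length = n then (1:ℂ) else 0)
        = if 1 = n then (1:ℂ) else 0 := by
      intro p; rw [toWord_gen_mul, hL]; rfl
    rw [Finset.sum_congr rfl (fun p _ => this p), Finset.sum_const, Finset.card_univ, hcard]
    simp only [hL] at *
    rw [cnt]
    simp only [List.length_nil, if_pos rfl]
    split <;> simp
  · have hcase : ∀ p : Fin N × Bool,
        (if (toWord (gen p * h)).length = n then (1:ℂ) else 0)
          = if p = (q.1, !q.2) then (if L.length = n then (1:ℂ) else 0)
            else (if L.length + 1 + 1 = n then (1:ℂ) else 0) := by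
      intro p
      rw [toWord_gen_mul, hL]
      by_cases hp : p = (q.1, !q.2)
      · subst hp; simp
      · have hnp : ¬(p.1 = q.1 ∧ p.2 = !q.2) := by
          rintro ⟨h1, h2⟩; exact hp (Prod.ext h1 h2)
        simp [hnp, hp]
    rw [Finset.sum_congr rfl (fun p _ => hcase p)]
    set A := (if L.length = n then (1:ℂ) else 0) with hA
    set B := (if L.length + 1 + 1 = n then (1:ℂ) else 0) with hB
    have hsplit : ∀ p : Fin N × Bool, (if p = (q.1, !q.2) then A else B)
        = (if p = (q.1, !q.2) then A - B else 0) + B := by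
      intro p; split <;> ring
    rw [Finset.sum_congr rfl (fun p _ => hsplit p), Finset.sum_add_distrib,
      Finset.sum_ite_eq' Finset.univ ((q.1, !q.2)) (fun _ => A - B),
      Finset.sum_const, Finset.card_univ, hcard, cnt]
    simp only [List.length_cons, Nat.succ_ne_zero, if_false, Finset.mem_univ, if_true,
      Nat.add_sub_cancel, ← hA, ← hB]
    push_cast
    ring

lemma count_inv (N n : ℕ) (h : FreeGroup (Fin N)) :
    ∑ p : Fin N × Bool, (if (toWord (gen p * h)).length = n then (1:ℂ) else 0)
      = ∑ p : Fin N × Bool, (if (toWord (gen p * h⁻¹)).length = n then (1:ℂ) else 0) := by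
  rw [count_eq, count_eq]
  have : (toWord h⁻¹).length = (toWord h).length := FreeGroup.norm_inv_eq
  rw [this]

lemma comm (N n : ℕ) : Commute (Xop N 1) (Xop N n) := by
  rw [Commute, SemiconjBy, Xop_eq N 1, Xop_eq N n, X1_eq]
  ext h
  rw [Finset.sum_mul, Finset.mul_sum, MonoidAlgebra.coeff_sum, MonoidAlgebra.coeff_sum, Finsupp.finset_sum_apply, Finsupp.finset_sum_apply]
  have hl : ∀ p : Fin N × Bool,
      ((MonoidAlgebra.single (gen p) (1:ℂ) * ∑ w ∈ T N n, MonoidAlgebra.single w (1:ℂ))).coeff h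
        = if (toWord ((gen p)⁻¹ * h)).length = n then (1:ℂ) else 0 := by
    intro p
    rw [MonoidAlgebra.single_mul_apply, Xop_apply, one_mul]
  have hr : ∀ p : Fin N × Bool,
      ((∑ w ∈ T N n, MonoidAlgebra.single w (1:ℂ)) * MonoidAlgebra.single (gen p) (1:ℂ)).coeff h
        = if (toWord (gen p * h⁻¹)).length = n then (1:ℂ) else 0 := by
    intro p
    have hnorm : (toWord (h * (gen p)⁻¹)).length = (toWord (gen p * h⁻¹)).length := by
      have := FreeGroup.norm_inv_eq (x := gen p * h⁻¹) (α := Fin N)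
      rw [mul_inv_rev, inv_inv] at this
      exact this
    rw [MonoidAlgebra.mul_single_apply, Xop_apply, mul_one, hnorm]
  rw [Finset.sum_congr rfl (fun p _ => hl p), Finset.sum_congr rfl (fun p _ => hr p)]
  have einv : Function.Involutive (fun p : Fin N × Bool => (p.1, !p.2)) := by
    intro p; simp
  have reindex : ∑ p : Fin N × Bool, (if (toWord ((gen p)⁻¹ * h)).length = n then (1:ℂ) else 0)
      = ∑ p : Fin N × Bool, (if (toWord (gen p * h)).length = n then (1:ℂ) else 0) := by
    apply Fintype.sum_equiv (einv.toPerm _)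
    intro p
    rw [inv_gen]
    rfl
  rw [reindex, count_inv]

end St15

theorem stmt_15 (N : ℕ) (hN : 1 ≤ N) (m : ℕ) (hm : 1 ≤ m)
    (k n : Fin m → ℕ) (hn : ∀ j, 1 ≤ n j) :
    tr (List.ofFn (fun j => (Xop N 1) ^ (k j) * Xop N (n j))).prod =
      tr ((Xop N 1) ^ (∑ j, k j) * (List.ofFn (fun j => Xop N (n j))).prod) := by
  have key : ∀ l : List (ℕ × ℕ),
      (l.map fun p => (Xop N 1) ^ p.1 * Xop N p.2).prod
        = (Xop N 1) ^ (l.map Prod.fst).sum * (l.map fun p => Xop N p.2).prod := by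
    intro l
    induction l with
    | nil => simp
    | cons a l ih =>
      simp only [List.map_cons, List.prod_cons, List.sum_cons, ih]
      rw [mul_assoc, ← mul_assoc (Xop N a.2), ← ((St15.comm N a.2).pow_left
        ((l.map Prod.fst).sum)).eq, mul_assoc, ← mul_assoc, ← pow_add]
  have := key (List.ofFn fun j => (k j, n j))
  simp only [List.map_ofFn, Function.comp_def, List.sum_ofFn] at this
  rw [this]
end

section
/- Let x = X_1 be the generating operator of the complex group algebra of the free group F_N on N ≥ 1 generators. For every m ≥ 1 there exist natural-number coefficients a_0, a_1, …, a_{⌊m/2⌋} with a_0 = 1 such that x^m = Σ_{i=0}^{⌊m/2⌋} a_i · X_{m−2i} (where X_0 denotes the identity of the algebra); in particular x^m equals X_m plus a nonnegative-integer combination of the operators X_{m−2i} for i ≥ 1. -/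
namespace St17

open FreeGroup

variable {N : ℕ}

lemma finite_WS (N n : ℕ) : {w : FreeGroup (Fin N) | w.toWord.length = n}.Finite := by
  have h : {w : FreeGroup (Fin N) | w.toWord.length = n}
      = FreeGroup.toWord ⁻¹' {l : List (Fin N × Bool) | l.length = n} := rfl
  rw [h]
  exact Set.Finite.preimage toWord_injective.injOn (List.finite_length_eq _ n)

noncomputable def WF (N n : ℕ) : Finset (FreeGroup (Fin N)) := (finite_WS N n).toFinset

lemma mem_WF {n : ℕ} {w : FreeGroup (Fin N)} : w ∈ WF N n ↔ w.toWord.length = n :=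
  Set.Finite.mem_toFinset _

noncomputable def Xn (N n : ℕ) : MonoidAlgebra ℂ (FreeGroup (Fin N)) :=
  ∑ w ∈ WF N n, MonoidAlgebra.single w 1

lemma Xop_eq (N n : ℕ) : Xop N n = Xn N n := by
  rw [Xop, finsum_mem_eq_finite_toFinset_sum _ (finite_WS N n)]
  rfl

lemma WF_zero : WF N 0 = {1} := by
  ext w
  simp [mem_WF, List.length_eq_zero_iff, toWord_eq_nil_iff]

lemma Xn_zero : Xn N 0 = 1 := by
  rw [Xn, WF_zero, Finset.sum_singleton, MonoidAlgebra.one_def]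

def gen (N : ℕ) (p : Fin N × Bool) : FreeGroup (Fin N) := FreeGroup.mk [p]

lemma toWord_gen (p : Fin N × Bool) : (gen N p).toWord = [p] := by
  rw [gen, toWord_mk, reduce_singleton]

lemma gen_injective : Function.Injective (gen N) := by
  intro p q h
  have := congrArg FreeGroup.toWord h
  rw [toWord_gen, toWord_gen] at this
  exact List.singleton_injective this

lemma gen_inv (p : Fin N × Bool) : (gen N p)⁻¹ = gen N (p.1, !p.2) := by
  rw [gen, inv_mk, gen]
  rfl

lemma toWord_gen_mul (p : Fin N × Bool) (w : FreeGroup (Fin N)) :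
    (gen N p * w).toWord = reduce (p :: w.toWord) := by
  conv_lhs => rw [← mk_toWord (x := w)]
  rw [gen, mul_mk, toWord_mk]
  rfl

lemma toWord_gen_mul_nil (p : Fin N × Bool) {w : FreeGroup (Fin N)} (h : w.toWord = []) :
    (gen N p * w).toWord = [p] := by
  rw [toWord_gen_mul, h, reduce_singleton]

lemma cancel_iff (p q : Fin N × Bool) : (p.1 = q.1 ∧ p.2 = !q.2) ↔ q = (p.1, !p.2) := by
  rcases p with ⟨pa, pb⟩; rcases q with ⟨qa, qb⟩
  cases pb <;> cases qb <;> simp_all <;> exact eq_comm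

lemma toWord_gen_mul_cancel (p : Fin N × Bool) {w : FreeGroup (Fin N)} {t : List (Fin N × Bool)}
    (h : w.toWord = (p.1, !p.2) :: t) : (gen N p * w).toWord = t := by
  have hred : reduce w.toWord = w.toWord := reduce_toWord w
  rw [h] at hred
  rw [toWord_gen_mul, h, reduce.cons, hred]
  simp

lemma toWord_gen_mul_noncancel (p q : Fin N × Bool) {w : FreeGroup (Fin N)}
    {t : List (Fin N × Bool)} (h : w.toWord = q :: t) (hq : q ≠ (p.1, !p.2)) :
    (gen N p * w).toWord = p :: q :: t := by
  have hred : reduce w.toWord = w.toWord := reduce_toWord w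
  rw [h] at hred
  rw [toWord_gen_mul, h, reduce.cons, hred]
  simp only [if_neg (fun hc => hq ((cancel_iff p q).1 hc))]

lemma reduce_tail {α : Type*} [DecidableEq α] {q : α × Bool} {t : List (α × Bool)}
    (h : reduce (q :: t) = q :: t) : reduce t = t := by
  have hlen : (reduce t).length ≤ t.length := Red.length_le reduce.red
  rw [reduce.cons] at h
  cases hr : reduce t with
  | nil =>
    rw [hr] at h
    simp only at h
    have ht : t = [] := (List.cons_eq_cons.mp h).2.symm
    rw [ht]
  | cons hd tl =>
    rw [hr] at h
    simp only at h
    split_ifs at h with hc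
    · exfalso
      have h1 := congrArg List.length h
      have h2 := congrArg List.length hr
      simp at h1 h2
      omega
    · exact (List.cons_eq_cons.mp h).2

lemma head_tail_ne {α : Type*} [DecidableEq α] {r s₀ : α × Bool} {s' : List (α × Bool)}
    (h : reduce (r :: s₀ :: s') = r :: s₀ :: s') : s₀ ≠ (r.1, !r.2) := by
  intro heq
  have ht : reduce (s₀ :: s') = s₀ :: s' := reduce_tail h
  rw [reduce.cons, ht, heq] at h
  simp [Bool.not_not] at h
  have := congrArg List.length h
  simp at this
  omega

lemma WF_one : WF N 1 = Finset.univ.image (gen N) := by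
  ext w
  simp only [mem_WF, Finset.mem_image, Finset.mem_univ, true_and]
  constructor
  · intro h
    obtain ⟨p, hp⟩ := List.length_eq_one_iff.mp h
    exact ⟨p, by rw [← mk_toWord (x := w), hp]; rfl⟩
  · rintro ⟨p, rfl⟩
    rw [toWord_gen]
    rfl

lemma X1_eq : Xn N 1 = ∑ p : Fin N × Bool, MonoidAlgebra.single (gen N p) (1 : ℂ) := by
  rw [Xn, WF_one, Finset.sum_image (fun p _ q _ h => gen_injective h)]

noncomputable abbrev hd (w : FreeGroup (Fin N)) : Option (Fin N × Bool) := w.toWord.head?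

/-- number of letters that can be prepended to a word of length `n-1`
without cancellation -/
def dd (N n : ℕ) : ℕ := if n = 1 then 2 * N else 2 * N - 1

lemma sum_noncancel (hN : 1 ≤ N) (n : ℕ) (hn : 1 ≤ n) :
    ∑ p : Fin N × Bool, ∑ w ∈ (WF N n).filter (fun w => ¬ hd w = some (p.1, !p.2)),
        MonoidAlgebra.single (gen N p * w) (1 : ℂ) = Xn N (n + 1) := by
  haveI : Inhabited (Fin N) := ⟨⟨0, hN⟩⟩
  rw [Xn]
  simp_rw [Finset.sum_filter]
  rw [← Finset.sum_product']
  rw [← Finset.sum_filter]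
  refine Finset.sum_nbij' (fun pw => gen N pw.1 * pw.2)
    (fun u => (u.toWord.headI, FreeGroup.mk u.toWord.tail)) ?_ ?_ ?_ ?_ ?_
  · rintro ⟨p, w⟩ hpw
    simp only [Finset.mem_filter, Finset.mem_product, Finset.mem_univ, true_and, mem_WF] at hpw ⊢
    obtain ⟨hw, hnc⟩ := hpw
    rcases hcase : w.toWord with _ | ⟨q, t⟩
    · rw [hcase] at hw; simp at hw; omega
    · have hq : q ≠ (p.1, !p.2) := by
        intro h
        exact hnc (by rw [hd, hcase, h]; rfl)
      rw [toWord_gen_mul_noncancel p q hcase hq]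
      rw [hcase] at hw
      simpa using hw
  · intro u hu
    rw [mem_WF] at hu
    rcases hcase : u.toWord with _ | ⟨r, s⟩
    · rw [hcase] at hu; simp at hu
    · have hred : reduce (r :: s) = r :: s := by
        rw [← hcase]; exact reduce_toWord u
    -- mk s has toWord s
      have hs : (FreeGroup.mk s).toWord = s := by
        rw [toWord_mk]
        rcases s with _ | ⟨s₀, s'⟩
        · rfl
        · exact reduce_tail hred
      simp only [Finset.mem_filter, Finset.mem_product, Finset.mem_univ, true_and, mem_WF]
      constructor
      · simp only [List.headI, List.tail, hs]
        rw [hcase] at hu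
        simpa using hu
      · simp only [List.headI, List.tail, hd, hs]
        rcases s with _ | ⟨s₀, s'⟩
        · simp
        · simp only [List.head?, Option.some.injEq]
          exact head_tail_ne hred
  · rintro ⟨p, w⟩ hpw
    dsimp only
    simp only [Finset.mem_filter, Finset.mem_product, Finset.mem_univ, true_and, mem_WF] at hpw
    obtain ⟨hw, hnc⟩ := hpw
    rcases hcase : w.toWord with _ | ⟨q, t⟩
    · rw [hcase] at hw; simp at hw; omega
    · have hq : q ≠ (p.1, !p.2) := by
        intro h
        exact hnc (by rw [hd, hcase, h]; rfl)
      rw [toWord_gen_mul_noncancel p q hcase hq]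
      show (p, FreeGroup.mk (q :: t)) = (p, w)
      rw [← hcase, mk_toWord]
  · intro u hu
    dsimp only
    rw [mem_WF] at hu
    rcases hcase : u.toWord with _ | ⟨r, s⟩
    · rw [hcase] at hu; simp at hu
    · have hred : reduce (r :: s) = r :: s := by
        rw [← hcase]; exact reduce_toWord u
      have hs : (FreeGroup.mk s).toWord = s := by
        rw [toWord_mk]
        rcases s with _ | ⟨s₀, s'⟩
        · rfl
        · exact reduce_tail hred
      show gen N r * FreeGroup.mk s = u
      apply toWord_injective
      rcases s with _ | ⟨s₀, s'⟩
      · rw [toWord_gen_mul_nil r hs, hcase]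
      · have hne : s₀ ≠ (r.1, !r.2) := head_tail_ne hred
        rw [toWord_gen_mul_noncancel r s₀ hs hne, hcase]
  · exact fun a _ => rfl

lemma sum_cancel_p (n : ℕ) (hn : 1 ≤ n) (p : Fin N × Bool) :
    ∑ w ∈ (WF N n).filter (fun w => hd w = some (p.1, !p.2)),
        MonoidAlgebra.single (gen N p * w) (1 : ℂ)
    = ∑ u ∈ (WF N (n - 1)).filter (fun u => ¬ hd u = some p), MonoidAlgebra.single u (1 : ℂ) := by
  refine Finset.sum_nbij' (fun w => gen N p * w) (fun u => (gen N p)⁻¹ * u) ?_ ?_ ?_ ?_ ?_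
  · intro w hw
    simp only [Finset.mem_filter, mem_WF] at hw ⊢
    obtain ⟨hlen, hhead⟩ := hw
    rcases hcase : w.toWord with _ | ⟨q, t⟩
    · simp [hd, hcase] at hhead
    · have hq : q = (p.1, !p.2) := by simpa [hd, hcase] using hhead
      subst hq
      have htw : (gen N p * w).toWord = t := toWord_gen_mul_cancel p hcase
      have hredw : reduce ((p.1, !p.2) :: t) = (p.1, !p.2) :: t := by
        rw [← hcase]; exact reduce_toWord w
      rw [hcase] at hlen
      simp only [List.length_cons] at hlen
      refine ⟨by rw [htw]; omega, ?_⟩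
      rcases t with _ | ⟨t₀, t'⟩
      · simp [hd, htw]
      · have hne := head_tail_ne hredw
        simp only [Bool.not_not] at hne
        simp only [hd, htw, List.head?, Option.some.injEq]
        intro hc
        exact hne (by simp [hc])
  · intro u hu
    simp only [Finset.mem_filter, mem_WF] at hu ⊢
    obtain ⟨hlen, hhead⟩ := hu
    rw [gen_inv]
    rcases hcase : u.toWord with _ | ⟨q, t⟩
    · have htw : (gen N (p.1, !p.2) * u).toWord = [(p.1, !p.2)] :=
        toWord_gen_mul_nil _ hcase
      rw [hcase] at hlen
      simp only [List.length_nil] at hlen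
      exact ⟨by rw [htw]; simp; omega, by simp [hd, htw]⟩
    · have hq : q ≠ ((p.1, !p.2).1, !(p.1, !p.2).2) := by
        simp only [Bool.not_not]
        intro hc
        apply hhead
        simp [hd, hcase, hc]
      have htw : (gen N (p.1, !p.2) * u).toWord = (p.1, !p.2) :: q :: t :=
        toWord_gen_mul_noncancel _ q hcase hq
      rw [hcase] at hlen
      simp only [List.length_cons] at hlen
      exact ⟨by rw [htw]; simp; omega, by simp [hd, htw]⟩
  · intro w _; exact inv_mul_cancel_left _ _
  · intro u _; exact mul_inv_cancel_left _ _
  · exact fun w _ => rfl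

lemma sum_cancel (hN : 1 ≤ N) (n : ℕ) (hn : 1 ≤ n) :
    ∑ p : Fin N × Bool, ∑ w ∈ (WF N n).filter (fun w => hd w = some (p.1, !p.2)),
        MonoidAlgebra.single (gen N p * w) (1 : ℂ) = dd N n • Xn N (n - 1) := by
  have hcard : ∀ u ∈ WF N (n - 1),
      (Finset.univ.filter (fun p : Fin N × Bool => ¬ hd u = some p)).card = dd N n := by
    intro u hu
    rw [mem_WF] at hu
    rcases hcase : u.toWord with _ | ⟨q, t⟩
    · have hn1 : n = 1 := by rw [hcase] at hu; simp at hu; omega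
      have : ∀ p : Fin N × Bool, ¬ hd u = some p := by
        intro p
        simp [hd, hcase]
      rw [Finset.filter_true_of_mem (fun p _ => this p)]
      simp [dd, hn1, Finset.card_univ, Nat.mul_comm]
    · have hn2 : n ≠ 1 := by
        intro h
        rw [h] at hu
        rw [hcase] at hu
        simp at hu
      have heq : (Finset.univ.filter (fun p : Fin N × Bool => ¬ hd u = some p))
          = Finset.univ.erase q := by
        ext p
        simp [hd, hcase, eq_comm]
      rw [heq, Finset.card_erase_of_mem (Finset.mem_univ q)]
      simp [dd, hn2, Finset.card_univ, Nat.mul_comm]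
  calc ∑ p : Fin N × Bool, ∑ w ∈ (WF N n).filter (fun w => hd w = some (p.1, !p.2)),
        MonoidAlgebra.single (gen N p * w) (1 : ℂ)
      = ∑ p : Fin N × Bool, ∑ u ∈ (WF N (n-1)).filter (fun u => ¬ hd u = some p),
          MonoidAlgebra.single u (1 : ℂ) := by
        exact Finset.sum_congr rfl fun p _ => sum_cancel_p n hn p
    _ = ∑ p : Fin N × Bool, ∑ u ∈ WF N (n-1),
          if ¬ hd u = some p then MonoidAlgebra.single u (1 : ℂ) else 0 := by
        exact Finset.sum_congr rfl fun p _ => Finset.sum_filter _ _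
    _ = ∑ u ∈ WF N (n-1), ∑ p : Fin N × Bool,
          if ¬ hd u = some p then MonoidAlgebra.single u (1 : ℂ) else 0 := Finset.sum_comm
    _ = ∑ u ∈ WF N (n-1), dd N n • MonoidAlgebra.single u (1 : ℂ) := by
        refine Finset.sum_congr rfl fun u hu => ?_
        rw [← Finset.sum_filter, Finset.sum_const, hcard u hu]
    _ = dd N n • Xn N (n - 1) := by rw [Xn, Finset.smul_sum]

lemma rec_mul (hN : 1 ≤ N) (n : ℕ) (hn : 1 ≤ n) :
    Xn N 1 * Xn N n = Xn N (n + 1) + dd N n • Xn N (n - 1) := by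
  rw [X1_eq, Xn, Finset.sum_mul_sum]
  simp_rw [MonoidAlgebra.single_mul_single, one_mul]
  have split : ∀ p : Fin N × Bool,
      (∑ w ∈ WF N n, MonoidAlgebra.single (gen N p * w) (1 : ℂ))
      = (∑ w ∈ (WF N n).filter (fun w => hd w = some (p.1, !p.2)),
          MonoidAlgebra.single (gen N p * w) (1 : ℂ))
        + ∑ w ∈ (WF N n).filter (fun w => ¬ hd w = some (p.1, !p.2)),
          MonoidAlgebra.single (gen N p * w) (1 : ℂ) :=
    fun p => (Finset.sum_filter_add_sum_filter_not _ _ _).symm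
  calc ∑ p : Fin N × Bool, ∑ w ∈ WF N n, MonoidAlgebra.single (gen N p * w) (1 : ℂ)
      = (∑ p : Fin N × Bool, ∑ w ∈ (WF N n).filter (fun w => hd w = some (p.1, !p.2)),
          MonoidAlgebra.single (gen N p * w) (1 : ℂ))
        + ∑ p : Fin N × Bool, ∑ w ∈ (WF N n).filter (fun w => ¬ hd w = some (p.1, !p.2)),
          MonoidAlgebra.single (gen N p * w) (1 : ℂ) := by
        rw [← Finset.sum_add_distrib]
        exact Finset.sum_congr rfl fun p _ => split p
    _ = dd N n • Xn N (n - 1) + Xn N (n + 1) := by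
        rw [sum_cancel hN n hn, sum_noncancel hN n hn]
    _ = Xn N (n + 1) + dd N n • Xn N (n - 1) := add_comm _ _

lemma main (hN : 1 ≤ N) : ∀ m, 1 ≤ m → ∃ a : ℕ → ℕ, a 0 = 1 ∧ (∀ i, a i ≠ 0 → 2 * i ≤ m) ∧
    (Xn N 1) ^ m = ∑ i ∈ Finset.range (m + 1), a i • Xn N (m - 2 * i) := by
  intro m
  induction m with
  | zero => omega
  | succ m ih =>
    intro _
    by_cases hm : 1 ≤ m
    case neg =>
      -- m = 0, so m + 1 = 1
      have hm0 : m = 0 := by omega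
      subst hm0
      refine ⟨fun i => if i = 0 then 1 else 0, by simp, fun i hi => by by_contra h; simp at hi ⊢; omega, ?_⟩
      rw [pow_one]
      rw [Finset.sum_range_succ, Finset.sum_range_one]
      simp
    case pos =>
      obtain ⟨a, ha0, hbd, heq⟩ := ih hm
      refine ⟨fun j => a j + (if 1 ≤ j ∧ 2 * j ≤ m + 1 then a (j - 1) * dd N (m - 2 * (j - 1)) else 0),
        by simp [ha0], ?_, ?_⟩
      · intro j hj
        by_contra hc
        push_neg at hc
        have h1 : a j = 0 := by
          by_contra h
          have := hbd j h
          omega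
        have h2 : ¬(1 ≤ j ∧ 2 * j ≤ m + 1) := by omega
        exact hj (by simp [h1, if_neg h2])
      · have key : ∀ i ∈ Finset.range (m + 1),
            a i • (Xn N 1 * Xn N (m - 2 * i))
            = a i • Xn N (m + 1 - 2 * i)
              + (if 1 ≤ i + 1 ∧ 2 * (i + 1) ≤ m + 1 then a i * dd N (m - 2 * i) else 0)
                  • Xn N (m + 1 - 2 * (i + 1)) := by
          intro i _
          by_cases hai : a i = 0
          · simp [hai]
          · have hle : 2 * i ≤ m := hbd i hai
            by_cases hlt : 2 * i + 1 ≤ m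
            · have hcond : 1 ≤ i + 1 ∧ 2 * (i + 1) ≤ m + 1 := by omega
              rw [if_pos hcond]
              rw [rec_mul hN (m - 2 * i) (by omega)]
              rw [show m - 2 * i + 1 = m + 1 - 2 * i by omega,
                show m - 2 * i - 1 = m + 1 - 2 * (i + 1) by omega]
              rw [smul_add, smul_smul]
            · have hcond : ¬(1 ≤ i + 1 ∧ 2 * (i + 1) ≤ m + 1) := by omega
              rw [if_neg hcond]
              have h2i : 2 * i = m := by omega
              rw [show m - 2 * i = 0 by omega, Xn_zero, mul_one,
                show m + 1 - 2 * i = 1 by omega]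
              simp
        calc (Xn N 1) ^ (m + 1) = Xn N 1 * (Xn N 1) ^ m := by rw [pow_succ']
          _ = ∑ i ∈ Finset.range (m + 1), a i • (Xn N 1 * Xn N (m - 2 * i)) := by
              rw [heq, Finset.mul_sum]
              exact Finset.sum_congr rfl fun i _ => mul_smul_comm _ _ _
          _ = (∑ i ∈ Finset.range (m + 1), a i • Xn N (m + 1 - 2 * i))
              + ∑ i ∈ Finset.range (m + 1),
                (if 1 ≤ i + 1 ∧ 2 * (i + 1) ≤ m + 1 then a i * dd N (m - 2 * i) else 0)
                  • Xn N (m + 1 - 2 * (i + 1)) := by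
              rw [← Finset.sum_add_distrib]
              exact Finset.sum_congr rfl key
          _ = ∑ j ∈ Finset.range (m + 1 + 1),
                (a j + (if 1 ≤ j ∧ 2 * j ≤ m + 1 then a (j - 1) * dd N (m - 2 * (j - 1)) else 0))
                  • Xn N (m + 1 - 2 * j) := by
              rw [Finset.sum_congr rfl
                (fun j _ => add_smul (a j) _ (Xn N (m + 1 - 2 * j))), Finset.sum_add_distrib]
              congr 1
              · conv_rhs => rw [Finset.sum_range_succ]
                have : a (m + 1) = 0 := by
                  by_contra h
                  have := hbd (m + 1) h
                  omega
                rw [this]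
                simp
              · conv_rhs => rw [Finset.sum_range_succ' (fun j =>
                  (if 1 ≤ j ∧ 2 * j ≤ m + 1 then a (j - 1) * dd N (m - 2 * (j - 1)) else 0)
                    • Xn N (m + 1 - 2 * j)) (m + 1)]
                simp only [Nat.add_sub_cancel]
                rw [if_neg (show ¬(1 ≤ 0 ∧ 2 * 0 ≤ m + 1) by omega)]
                simp

end St17

theorem stmt_17 (N : ℕ) (hN : 1 ≤ N) (m : ℕ) (hm : 1 ≤ m) :
    ∃ a : ℕ → ℕ, a 0 = 1 ∧
      (Xop N 1) ^ m = ∑ i ∈ Finset.range (m / 2 + 1), (a i) • Xop N (m - 2 * i) := by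
  obtain ⟨a, ha0, hbd, heq⟩ := St17.main hN m hm
  refine ⟨a, ha0, ?_⟩
  simp only [St17.Xop_eq]
  rw [heq]
  refine (Finset.sum_subset ?_ ?_).symm
  · intro x hx
    simp only [Finset.mem_range] at hx ⊢
    omega
  · intro x hx hnx
    simp only [Finset.mem_range] at hx hnx
    have hx2 : m < 2 * x := by omega
    have : a x = 0 := by
      by_contra h
      have := hbd x h
      omega
    rw [this, zero_smul]
end
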